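/- arXiv:math/0011239 — 12 statements merged into one kernel-verified Lean document; each statement's English description precedes it below -/
import Mathlib

section
/- Let n ≥ 1 and B ≥ 2 be integers. The function E : Δ_n → ℝ satisfies E(e(j)) = 0 for every vertex e(j) of Δ_n (0 ≤ j ≤ n), E(x) ≥ 0 for all x ∈ Δ_n, and E is approximately convex with respect to Δ_{B-1}. -/
open Finset

/-- `f` is approximately convex with respect to `Δ_{B-1}` on the convex set `U`,
with tolerance `ε`. -/
def ApproxConvexWrt {V : Type*} [AddCommMonoid V] [Module ℝ V]
    (B : ℕ) (U : Set V) (f : V → ℝ) (ε : ℝ) : Prop :=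
  ∀ (x : Fin B → V) (t : Fin B → ℝ),
    (∀ i, x i ∈ U) → (∀ i, 0 ≤ t i) → (∑ i, t i) = 1 →
    f (∑ i, t i • x i) ≤ (∑ i, t i * f (x i)) + ε

/-- The extremal function
`E(x) = min{ Σ m(j) x(j) : m(j) ∈ ℕ, Σ sgn(x(j)) B^{-m(j)} ≤ 1 }`. -/
noncomputable def Efun (n B : ℕ) (x : Fin (n + 1) → ℝ) : ℝ :=
  sInf { s : ℝ | ∃ m : Fin (n + 1) → ℕ,
    (∑ j, Real.sign (x j) * ((B : ℝ) ^ (m j))⁻¹) ≤ 1 ∧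
    s = ∑ j, (m j : ℝ) * x j }

lemma sign_nonneg_of_nonneg {r : ℝ} (h : 0 ≤ r) : 0 ≤ Real.sign r := by
  rcases h.eq_or_lt with h | h
  · simp [← h]
  · simp [Real.sign_of_pos h]

lemma sign_le_one' (r : ℝ) : Real.sign r ≤ 1 := by
  rcases lt_trichotomy r 0 with h | h | h <;>
    simp [Real.sign_of_neg, Real.sign_of_pos, *]

lemma Efun_bddBelow (n B : ℕ) (x : Fin (n + 1) → ℝ) (hx : ∀ j, 0 ≤ x j) :
    BddBelow { s : ℝ | ∃ m : Fin (n + 1) → ℕ,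
      (∑ j, Real.sign (x j) * ((B : ℝ) ^ (m j))⁻¹) ≤ 1 ∧
      s = ∑ j, (m j : ℝ) * x j } := by
  refine ⟨0, fun s hs => ?_⟩
  obtain ⟨m, -, rfl⟩ := hs
  exact Finset.sum_nonneg fun j _ => mul_nonneg (by positivity) (hx j)

lemma Efun_nonempty (n B : ℕ) (hB : 2 ≤ B) (x : Fin (n + 1) → ℝ) :
    Set.Nonempty { s : ℝ | ∃ m : Fin (n + 1) → ℕ,
      (∑ j, Real.sign (x j) * ((B : ℝ) ^ (m j))⁻¹) ≤ 1 ∧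
      s = ∑ j, (m j : ℝ) * x j } := by
  refine ⟨∑ j, ((n + 1 : ℕ) : ℝ) * x j, fun _ => n + 1, ?_, rfl⟩
  have hBpos : (0 : ℝ) < (B : ℝ) ^ (n + 1) := by positivity
  have hle : ((n : ℝ) + 1) ≤ (B : ℝ) ^ (n + 1) := by
    have h1 : n + 1 < 2 ^ (n + 1) := Nat.lt_two_pow_self (n := n + 1)
    have h2 : (2 : ℕ) ^ (n + 1) ≤ B ^ (n + 1) := Nat.pow_le_pow_left hB _
    have : n + 1 ≤ B ^ (n + 1) := le_trans h1.le h2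
    exact_mod_cast this
  calc ∑ j : Fin (n + 1), Real.sign (x j) * ((B : ℝ) ^ (n + 1))⁻¹
      ≤ ∑ j : Fin (n + 1), ((B : ℝ) ^ (n + 1))⁻¹ := by
        refine Finset.sum_le_sum fun j _ => ?_
        have := sign_le_one' (x j)
        nlinarith [inv_nonneg.mpr hBpos.le]
    _ = ((n : ℝ) + 1) * ((B : ℝ) ^ (n + 1))⁻¹ := by
        rw [Finset.sum_const]; simp
    _ ≤ 1 := by
        rw [mul_inv_le_iff₀ hBpos, one_mul]; exact hle

theorem stmt0 (n B : ℕ) (hn : 1 ≤ n) (hB : 2 ≤ B) :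
    (∀ j : Fin (n + 1), Efun n B (Pi.single j 1) = 0) ∧
    (∀ x ∈ stdSimplex ℝ (Fin (n + 1)), 0 ≤ Efun n B x) ∧
    ApproxConvexWrt B (stdSimplex ℝ (Fin (n + 1))) (Efun n B) 1 := by
  have hBR : (1 : ℝ) ≤ (B : ℝ) := by exact_mod_cast le_trans (by norm_num) hB
  have hBpos : (0 : ℝ) < (B : ℝ) := lt_of_lt_of_le one_pos hBR
  refine ⟨?_, ?_, ?_⟩
  · -- vertices
    intro j
    have hxj : ∀ k, 0 ≤ (Pi.single j 1 : Fin (n + 1) → ℝ) k := by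
      intro k
      rcases eq_or_ne k j with rfl | h
      · simp
      · simp [Pi.single_apply, h]
    unfold Efun
    apply le_antisymm
    · refine csInf_le (Efun_bddBelow n B _ hxj) ⟨fun _ => 0, ?_, by simp⟩
      have : ∀ k : Fin (n + 1),
          Real.sign ((Pi.single j 1 : Fin (n + 1) → ℝ) k) * ((B : ℝ) ^ (0 : ℕ))⁻¹
          = if k = j then 1 else 0 := by
        intro k
        rcases eq_or_ne k j with rfl | h
        · simp
        · simp [Pi.single_apply, h]
      rw [Finset.sum_congr rfl fun k _ => this k]
      simp
    · refine Real.sInf_nonneg fun s hs => ?_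
      obtain ⟨m, -, rfl⟩ := hs
      exact Finset.sum_nonneg fun k _ => mul_nonneg (by positivity) (hxj k)
  · -- nonnegativity
    intro x hx
    refine Real.sInf_nonneg fun s hs => ?_
    obtain ⟨m, -, rfl⟩ := hs
    exact Finset.sum_nonneg fun k _ => mul_nonneg (by positivity) (hx.1 k)
  · -- approximate convexity
    intro x t hx ht hsum
    set y : Fin (n + 1) → ℝ := ∑ i, t i • x i with hy
    have hyj : ∀ j, y j = ∑ i, t i * x i j := by
      intro j; simp [hy, Finset.sum_apply]
    have hy0 : ∀ j, 0 ≤ y j := by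
      intro j; rw [hyj]
      exact Finset.sum_nonneg fun i _ => mul_nonneg (ht i) ((hx i).1 j)
    refine le_of_forall_pos_le_add fun δ hδ => ?_
    -- choose near-optimal m for each x i
    have hmi : ∀ i, ∃ m : Fin (n + 1) → ℕ,
        (∑ j, Real.sign (x i j) * ((B : ℝ) ^ (m j))⁻¹) ≤ 1 ∧
        (∑ j, (m j : ℝ) * x i j) < Efun n B (x i) + δ := by
      intro i
      obtain ⟨a, ha, halt⟩ := Real.lt_sInf_add_pos (Efun_nonempty n B hB (x i)) hδ
      obtain ⟨m, hm1, rfl⟩ := ha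
      exact ⟨m, hm1, halt⟩
    choose m hm1 hm2 using hmi
    set μ : Fin (n + 1) → ℕ := fun j => sInf { k | ∃ i, 0 < x i j ∧ m i j = k } with hμ
    set M : Fin (n + 1) → ℕ := fun j => μ j + 1 with hM
    have hμle : ∀ i j, 0 < x i j → μ j ≤ m i j := fun i j h =>
      Nat.sInf_le ⟨i, h, rfl⟩
    -- feasibility of M for y
    have hfeas : ∑ j, Real.sign (y j) * ((B : ℝ) ^ (M j))⁻¹ ≤ 1 := by
      have key : ∀ j, Real.sign (y j) * ((B : ℝ) ^ (M j))⁻¹ ≤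
          (B : ℝ)⁻¹ * ∑ i, Real.sign (x i j) * ((B : ℝ) ^ (m i j))⁻¹ := by
        intro j
        have hRHS : 0 ≤ ∑ i, Real.sign (x i j) * ((B : ℝ) ^ (m i j))⁻¹ :=
          Finset.sum_nonneg fun i _ =>
            mul_nonneg (sign_nonneg_of_nonneg ((hx i).1 j)) (by positivity)
        rcases (hy0 j).eq_or_lt with h | h
        · rw [← h, Real.sign_zero, zero_mul]
          positivity
        · rw [Real.sign_of_pos h, one_mul]
          have hex : { k | ∃ i, 0 < x i j ∧ m i j = k }.Nonempty := by
            have hxi : ∃ i, 0 < x i j := by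
              by_contra hc
              push_neg at hc
              have hz : ∀ i, x i j = 0 := fun i => le_antisymm (hc i) ((hx i).1 j)
              have : y j = 0 := by
                rw [hyj]; exact Finset.sum_eq_zero fun i _ => by rw [hz i, mul_zero]
              exact absurd this h.ne'
            obtain ⟨i, hi⟩ := hxi
            exact ⟨m i j, i, hi, rfl⟩
          obtain ⟨i0, hi0pos, hi0⟩ := Nat.sInf_mem hex
          have step1 : ((B : ℝ) ^ (M j))⁻¹
              = (B : ℝ)⁻¹ * (Real.sign (x i0 j) * ((B : ℝ) ^ (m i0 j))⁻¹) := by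
            rw [Real.sign_of_pos hi0pos, one_mul, hM]
            simp only
            rw [pow_succ, mul_inv]
            rw [show (μ j : ℕ) = m i0 j from hi0.symm]
            ring
          rw [step1]
          have : Real.sign (x i0 j) * ((B : ℝ) ^ (m i0 j))⁻¹ ≤
              ∑ i, Real.sign (x i j) * ((B : ℝ) ^ (m i j))⁻¹ :=
            Finset.single_le_sum (f := fun i => Real.sign (x i j) * ((B : ℝ) ^ (m i j))⁻¹)
              (fun i _ => mul_nonneg (sign_nonneg_of_nonneg ((hx i).1 j)) (by positivity))
              (Finset.mem_univ i0)
          have hBinv : (0 : ℝ) ≤ (B : ℝ)⁻¹ := by positivity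
          nlinarith
      calc ∑ j, Real.sign (y j) * ((B : ℝ) ^ (M j))⁻¹
          ≤ ∑ j, (B : ℝ)⁻¹ * ∑ i, Real.sign (x i j) * ((B : ℝ) ^ (m i j))⁻¹ :=
            Finset.sum_le_sum fun j _ => key j
        _ = (B : ℝ)⁻¹ * ∑ i, ∑ j, Real.sign (x i j) * ((B : ℝ) ^ (m i j))⁻¹ := by
            rw [← Finset.mul_sum, Finset.sum_comm]
        _ ≤ (B : ℝ)⁻¹ * ∑ i : Fin B, (1 : ℝ) := by
            have hBinv : (0 : ℝ) ≤ (B : ℝ)⁻¹ := by positivity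
            refine mul_le_mul_of_nonneg_left ?_ hBinv
            exact Finset.sum_le_sum fun i _ => hm1 i
        _ = (B : ℝ)⁻¹ * B := by simp
        _ = 1 := inv_mul_cancel₀ hBpos.ne'
    -- value bound
    have hsumy : ∑ j, y j = 1 := by
      rw [Finset.sum_congr rfl fun j _ => hyj j, Finset.sum_comm]
      rw [← hsum]
      refine Finset.sum_congr rfl fun i _ => ?_
      rw [← Finset.mul_sum, (hx i).2, mul_one]
    have h3 : ∑ j, (μ j : ℝ) * y j ≤ ∑ i, t i * ∑ j, (m i j : ℝ) * x i j := by
      have : ∑ j, (μ j : ℝ) * y j = ∑ i, ∑ j, t i * ((μ j : ℝ) * x i j) := by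
        rw [Finset.sum_comm]
        refine Finset.sum_congr rfl fun j _ => ?_
        rw [hyj, Finset.mul_sum]
        exact Finset.sum_congr rfl fun i _ => by ring
      rw [this]
      refine Finset.sum_le_sum fun i _ => ?_
      rw [Finset.mul_sum]
      refine Finset.sum_le_sum fun j _ => ?_
      rcases ((hx i).1 j).eq_or_lt with h | h
      · rw [← h]; simp
      · have := hμle i j h
        have hc : (μ j : ℝ) ≤ (m i j : ℝ) := by exact_mod_cast this
        have := mul_le_mul_of_nonneg_right hc h.le
        nlinarith [ht i, mul_nonneg (Nat.cast_nonneg (μ j)) h.le]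
    have hval : ∑ j, (M j : ℝ) * y j ≤ ∑ i, t i * ∑ j, (m i j : ℝ) * x i j + 1 := by
      have h1 : ∑ j, (M j : ℝ) * y j = ∑ j, (μ j : ℝ) * y j + ∑ j, y j := by
        rw [← Finset.sum_add_distrib]
        refine Finset.sum_congr rfl fun j _ => ?_
        rw [hM]; push_cast; ring
      rw [h1, hsumy]
      linarith
    have hEle : Efun n B y ≤ ∑ j, (M j : ℝ) * y j :=
      csInf_le (Efun_bddBelow n B y hy0) ⟨M, hfeas, rfl⟩
    have hfin : ∑ i, t i * ∑ j, (m i j : ℝ) * x i j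
        ≤ ∑ i, t i * (Efun n B (x i) + δ) :=
      Finset.sum_le_sum fun i _ => mul_le_mul_of_nonneg_left (hm2 i).le (ht i)
    have hexp : ∑ i, t i * (Efun n B (x i) + δ) = ∑ i, t i * Efun n B (x i) + δ := by
      rw [Finset.sum_congr rfl fun i _ => mul_add (t i) (Efun n B (x i)) δ,
        Finset.sum_add_distrib, ← Finset.sum_mul, hsum, one_mul]
    calc Efun n B (∑ i, t i • x i) = Efun n B y := by rw [hy]
      _ ≤ ∑ j, (M j : ℝ) * y j := hEle
      _ ≤ ∑ i, t i * ∑ j, (m i j : ℝ) * x i j + 1 := hval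
      _ ≤ ∑ i, t i * Efun n B (x i) + δ + 1 := by rw [← hexp]; linarith
      _ = ∑ i, t i * Efun n B (x i) + 1 + δ := by ring
end

section
/- Let n ≥ 1 and B ≥ 2 be integers. If m(0),…,m(n) are integers with m(j) ≥ 1 for each 0 ≤ j ≤ n and Σ_{j=0}^n B^{-m(j)} ≤ 1, then the index set {0,1,…,n} can be written as the disjoint union of sets P_1,…,P_B such that Σ_{j∈P_k} B^{-m(j)} ≤ 1/B for each k = 1,…,B. -/
open Finset

set_option maxHeartbeats 1000000

theorem stmt1 (n B : ℕ) (hn : 1 ≤ n) (hB : 2 ≤ B)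
    (m : Fin (n + 1) → ℕ) (hm : ∀ j, 1 ≤ m j)
    (hsum : (∑ j, ((B : ℝ) ^ (m j))⁻¹) ≤ 1) :
    ∃ P : Fin B → Finset (Fin (n + 1)),
      (∀ k l, k ≠ l → Disjoint (P k) (P l)) ∧
      (Finset.univ.biUnion P = Finset.univ) ∧
      (∀ k, (∑ j ∈ P k, ((B : ℝ) ^ (m j))⁻¹) ≤ 1 / B) := by
  have hB0 : (0:ℝ) < (B:ℝ) := by
    have : (0:ℕ) < B := by omega
    exact_mod_cast this
  set σ := Tuple.sort m with hσdef
  set g : Fin (n+1) → ℝ := fun i => ((B:ℝ) ^ (m (σ i)))⁻¹ with hgdef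
  have hgpos : ∀ i, 0 < g i := fun i => by
    have : (0:ℝ) < (B:ℝ) ^ (m (σ i)) := by positivity
    exact inv_pos.mpr this
  set S : Fin (n+1) → ℝ := fun i => ∑ i' ∈ Finset.Iio i, g i' with hSdef
  have hmono : Monotone (m ∘ σ) := Tuple.monotone_sort m
  have hS0 : ∀ i, 0 ≤ S i := fun i => Finset.sum_nonneg fun i' _ => (hgpos i').le
  have htot : ∀ i, S i + g i ≤ 1 := by
    intro i
    have h1 : S i + g i = ∑ i' ∈ insert i (Finset.Iio i), g i' := by
      rw [Finset.sum_insert (by simp)]; ring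
    have h2 : ∑ i' ∈ insert i (Finset.Iio i), g i' ≤ ∑ i', g i' :=
      Finset.sum_le_sum_of_subset_of_nonneg (Finset.subset_univ _)
        (fun i' _ _ => (hgpos i').le)
    have h3 : ∑ i', g i' = ∑ j, ((B:ℝ) ^ (m j))⁻¹ :=
      Equiv.sum_comp σ (fun j => ((B:ℝ) ^ (m j))⁻¹)
    linarith
  have hSlt1 : ∀ i, S i < 1 := fun i => by
    have h1 := htot i; have h2 := hgpos i; linarith
  have hfl : ∀ i, ⌊(B:ℝ) * S i⌋₊ < B := by
    intro i
    have h : (B:ℝ) * S i < B := by nlinarith [hSlt1 i, hS0 i]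
    have h0 : 0 ≤ (B:ℝ) * S i := by positivity
    exact_mod_cast (Nat.floor_lt h0).2 (by exact_mod_cast h)
  set bin : Fin (n+1) → Fin B := fun j => ⟨⌊(B:ℝ) * S (σ.symm j)⌋₊, hfl _⟩ with hbindef
  have hbinσ : ∀ i, (bin (σ i) : ℕ) = ⌊(B:ℝ) * S i⌋₊ := by
    intro i; simp [hbindef]
  refine ⟨fun k => Finset.univ.filter (fun j => bin j = k), ?_, ?_, ?_⟩
  · intro k l hkl
    rw [Finset.disjoint_left]
    intro j hj hj'
    simp only [Finset.mem_filter] at hj hj'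
    exact hkl (hj.2.symm.trans hj'.2)
  · ext j
    simp only [Finset.mem_biUnion, Finset.mem_univ, Finset.mem_filter, iff_true]
    exact ⟨bin j, by simp, by simp⟩
  · intro k
    set T : Finset (Fin (n+1)) := Finset.univ.filter (fun i => bin (σ i) = k) with hTdef
    have hre : ∑ j ∈ Finset.univ.filter (fun j => bin j = k), ((B:ℝ)^(m j))⁻¹
        = ∑ i ∈ T, g i := by
      rw [hTdef, Finset.sum_filter, Finset.sum_filter]
      exact (Equiv.sum_comp σ (fun j => if bin j = k then ((B:ℝ)^(m j))⁻¹ else 0)).symm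
    rw [hre]
    by_cases hT : T.Nonempty
    · set a := T.min' hT with hadef
      set b := T.max' hT with hbdef
      have haT : a ∈ T := T.min'_mem hT
      have hbT : b ∈ T := T.max'_mem hT
      have hab : a ≤ b := T.min'_le b (T.max'_mem hT)
      have hka : ⌊(B:ℝ) * S a⌋₊ = (k : ℕ) := by
        have := (Finset.mem_filter.mp haT).2
        rw [← hbinσ a, this]
      have hkb : ⌊(B:ℝ) * S b⌋₊ = (k : ℕ) := by
        have := (Finset.mem_filter.mp hbT).2
        rw [← hbinσ b, this]
      -- lower bound on S a
      have hSa : (k:ℝ) ≤ (B:ℝ) * S a := by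
        rw [← hka]
        exact Nat.floor_le (mul_nonneg hB0.le (hS0 a))
      -- upper bound on S b
      have hSb : (B:ℝ) * S b < (k:ℝ) + 1 := by
        calc (B:ℝ) * S b < ⌊(B:ℝ) * S b⌋₊ + 1 := Nat.lt_floor_add_one _
          _ = (k:ℝ) + 1 := by rw [hkb]
      -- S b is a natural multiple of g b
      set M := m (σ b) with hMdef
      have hM1 : 1 ≤ M := hm _
      have hBM : (0:ℝ) < (B:ℝ)^M := by positivity
      set c : ℕ := ∑ i ∈ Finset.Iio b, B ^ (M - m (σ i)) with hcdef
      have hSbc : S b * (B:ℝ)^M = (c:ℝ) := by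
        rw [hSdef, hcdef]
        push_cast
        rw [Finset.sum_mul]
        apply Finset.sum_congr rfl
        intro i hi
        have hle : m (σ i) ≤ M := hmono (le_of_lt (Finset.mem_Iio.mp hi))
        have hpow : (B:ℝ)^M = (B:ℝ)^(m (σ i)) * (B:ℝ)^(M - m (σ i)) := by
          rw [← pow_add]; congr 1; omega
        have hne : ((B:ℝ)^(m (σ i))) ≠ 0 := by positivity
        rw [hpow, inv_mul_cancel_left₀ hne]
      -- c < (k+1) * B^(M-1)
      have hBMsplit : (B:ℝ)^M = (B:ℝ)^(M-1) * B := by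
        rw [← pow_succ]; congr 1; omega
      have hcR : (c:ℝ) < ((k:ℝ) + 1) * (B:ℝ)^(M-1) := by
        rw [← hSbc]
        calc S b * (B:ℝ)^M = ((B:ℝ) * S b) * (B:ℝ)^(M-1) := by
              rw [hBMsplit]; ring
          _ < ((k:ℝ) + 1) * (B:ℝ)^(M-1) := by
              apply mul_lt_mul_of_pos_right hSb (by positivity)
      have hcN : c < ((k:ℕ) + 1) * B^(M-1) := by
        have : (c:ℝ) < (((k:ℕ) + 1) * B^(M-1) : ℕ) := by push_cast; exact hcR
        exact_mod_cast this
      have hc1 : ((c:ℝ) + 1) ≤ ((k:ℝ) + 1) * (B:ℝ)^(M-1) := by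
        have : (c + 1 : ℕ) ≤ ((k:ℕ) + 1) * B^(M-1) := hcN
        calc (c:ℝ) + 1 = ((c + 1 : ℕ) : ℝ) := by push_cast; ring
          _ ≤ (((k:ℕ) + 1) * B^(M-1) : ℕ) := by exact_mod_cast this
          _ = ((k:ℝ) + 1) * (B:ℝ)^(M-1) := by push_cast; ring
      -- hence S b + g b ≤ (k+1)/B
      have hSbgb : S b + g b ≤ ((k:ℝ) + 1) / B := by
        have hgb : g b = ((B:ℝ)^M)⁻¹ := rfl
        have h1 : (S b + g b) * (B:ℝ)^M = (c:ℝ) + 1 := by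
          rw [add_mul, hSbc, hgb, inv_mul_cancel₀ (ne_of_gt hBM)]
        have h2 : (S b + g b) * (B:ℝ)^M ≤ (((k:ℝ) + 1) / B) * (B:ℝ)^M := by
          rw [h1]
          calc (c:ℝ) + 1 ≤ ((k:ℝ) + 1) * (B:ℝ)^(M-1) := hc1
            _ = (((k:ℝ) + 1) / B) * (B:ℝ)^M := by
                rw [hBMsplit]; field_simp
        exact le_of_mul_le_mul_right h2 hBM
      -- sum over T bounded by telescoping over Icc a b
      have hTsub : T ⊆ Finset.Icc a b := by
        intro i hi
        exact Finset.mem_Icc.mpr ⟨T.min'_le i hi, T.le_max' i hi⟩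
      have hIcc : Finset.Icc a b = Finset.Iic b \ Finset.Iio a := by
        ext i
        simp only [Finset.mem_Icc, Finset.mem_sdiff, Finset.mem_Iic, Finset.mem_Iio, not_lt]
        tauto
      have hIioSub : Finset.Iio a ⊆ Finset.Iic b := by
        intro i hi
        exact Finset.mem_Iic.mpr (le_trans (le_of_lt (Finset.mem_Iio.mp hi)) hab)
      have hIic : ∑ i ∈ Finset.Iic b, g i = S b + g b := by
        rw [← Finset.Iio_insert, Finset.sum_insert (by simp)]
        rw [hSdef]; ring
      have hsumT : ∑ i ∈ T, g i ≤ (S b + g b) - S a := by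
        calc ∑ i ∈ T, g i ≤ ∑ i ∈ Finset.Icc a b, g i :=
              Finset.sum_le_sum_of_subset_of_nonneg hTsub (fun i _ _ => (hgpos i).le)
          _ = ∑ i ∈ Finset.Iic b, g i - ∑ i ∈ Finset.Iio a, g i := by
              rw [hIcc, Finset.sum_sdiff_eq_sub hIioSub]
          _ = (S b + g b) - S a := by rw [hIic, hSdef]
      have hSaLB : (k:ℝ) / B ≤ S a := by
        rw [div_le_iff₀ hB0, mul_comm]
        exact hSa
      calc ∑ i ∈ T, g i ≤ (S b + g b) - S a := hsumT
        _ ≤ ((k:ℝ) + 1) / B - (k:ℝ) / B := by linarith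
        _ = 1 / B := by field_simp; ring
    · rw [Finset.not_nonempty_iff_eq_empty] at hT
      rw [hT, Finset.sum_empty]
      positivity
end

section
/- Let n ≥ 1 and B ≥ 2 be integers. The function E is extremal: if h : Δ_n → ℝ is approximately convex with respect to Δ_{B-1} and h(e(j)) ≤ 0 for every vertex e(j) of Δ_n (0 ≤ j ≤ n), then h(x) ≤ E(x) for all x ∈ Δ_n. -/
open Finset

lemma partition_lemma {ι : Type*} [DecidableEq ι] (B C : ℕ) (hB : 2 ≤ B) (w : ι → ℕ) :
    ∀ (S : Finset ι),
      (∀ j ∈ S, ∃ e ≤ C, w j = B ^ e) →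
      (∑ j ∈ S, w j ≤ B ^ (C + 1)) →
      ∃ f : ι → Fin B, ∀ i : Fin B, ∑ j ∈ S.filter (fun j => f j = i), w j ≤ B ^ C := by
  intro S
  induction S using Finset.strongInduction with
  | _ S ih =>
    intro hw hsum
    rcases S.eq_empty_or_nonempty with rfl | hS
    · exact ⟨fun _ => ⟨0, by omega⟩, fun i => by simp⟩
    · obtain ⟨j0, hj0S, hj0min⟩ := S.exists_min_image w hS
      set S' := S.erase j0 with hS'
      have hss : S' ⊂ S := Finset.erase_ssubset hj0S
      obtain ⟨f, hf⟩ := ih S' hss (fun j hj => hw j (Finset.mem_of_mem_erase hj))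
        (le_trans (Finset.sum_le_sum_of_subset hss.subset) hsum)
      -- loads
      set L : Fin B → ℕ := fun i => ∑ j ∈ S'.filter (fun j => f j = i), w j with hL
      obtain ⟨e0, he0C, he0⟩ := hw j0 hj0S
      have hdvd : ∀ j ∈ S, w j0 ∣ w j := by
        intro j hj
        obtain ⟨e, heC, he⟩ := hw j hj
        have : e0 ≤ e := by
          have := hj0min j hj
          rw [he0, he] at this
          exact (Nat.pow_le_pow_iff_right (by omega)).1 this
        rw [he0, he]; exact pow_dvd_pow B this
      have hw0pos : 0 < w j0 := by rw [he0]; positivity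
      have hex : ∃ i0 : Fin B, L i0 + w j0 ≤ B ^ C := by
        by_contra hcon
        push_neg at hcon
        have hLall : ∀ i, L i = B ^ C := by
          intro i
          have h1 : L i ≤ B ^ C := hf i
          have h2 : w j0 ∣ L i :=
            Finset.dvd_sum fun j hj => hdvd j (Finset.mem_of_mem_erase (Finset.mem_of_mem_filter j hj))
          have h3 : w j0 ∣ B ^ C := he0 ▸ pow_dvd_pow B he0C
          have hci := hcon i
          have h4 : w j0 ∣ (B ^ C - L i) := Nat.dvd_sub h3 h2
          have h5 : B ^ C - L i < w j0 := by omega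
          have h6 := Nat.eq_zero_of_dvd_of_lt h4 h5
          omega
        have htot : ∑ i : Fin B, L i = ∑ j ∈ S', w j := by
          simpa [hL] using Finset.sum_fiberwise S' f w
        have : ∑ j ∈ S', w j = B * B ^ C := by
          rw [← htot]
          simp [hLall, Finset.sum_const, Finset.card_univ, mul_comm]
        have hsub : ∑ j ∈ S', w j + w j0 = ∑ j ∈ S, w j := by
          rw [hS', Finset.sum_erase_add S w hj0S]
        have : B * B ^ C = B ^ (C + 1) := by ring
        omega
      obtain ⟨i0, hi0⟩ := hex
      refine ⟨Function.update f j0 i0, fun i => ?_⟩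
      have hSins : S = insert j0 S' := (Finset.insert_erase hj0S).symm
      have hfilt : S'.filter (fun j => Function.update f j0 i0 j = i)
          = S'.filter (fun j => f j = i) := by
        apply Finset.filter_congr
        intro j hj
        have : j ≠ j0 := Finset.ne_of_mem_erase hj
        simp [Function.update_of_ne this]
      rw [hSins, Finset.filter_insert]
      by_cases hii : i = i0
      · subst hii
        rw [if_pos (by simp), Finset.sum_insert (by simp [hS'])]
        rw [hfilt]
        have h7 : (∑ j ∈ S'.filter (fun j => f j = i), w j) + w j0 ≤ B ^ C := hi0
        omega
      · rw [if_neg (by simp only [Function.update_self]; exact fun hc => hii hc.symm), hfilt]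
        exact hf i

lemma case1 (n B : ℕ) (hB : 2 ≤ B) (h : (Fin (n+1) → ℝ) → ℝ)
    (hvert : ∀ j, h (Pi.single j 1) ≤ 0)
    (m : Fin (n+1) → ℕ) (x : Fin (n+1) → ℝ) (hx : x ∈ stdSimplex ℝ (Fin (n+1)))
    (hkraft : ∑ j ∈ Finset.univ.filter (fun j => x j ≠ 0), ((B:ℝ) ^ (m j))⁻¹ ≤ 1)
    (j0 : Fin (n+1)) (hj0 : x j0 ≠ 0) (hm0 : m j0 = 0) :
    h x ≤ ∑ j, (m j : ℝ) * x j := by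
  have hBpos : (0:ℝ) < B := by positivity
  have hzero : ∀ j, j ≠ j0 → x j = 0 := by
    intro j1 hne
    by_contra hj1
    have hpair : ({j0, j1} : Finset (Fin (n+1))) ⊆ Finset.univ.filter (fun j => x j ≠ 0) := by
      intro j hj
      simp only [Finset.mem_insert, Finset.mem_singleton] at hj
      rcases hj with rfl | rfl <;> simp [hj0, hj1]
    have h1 : ∑ j ∈ ({j0, j1} : Finset (Fin (n+1))), ((B:ℝ) ^ (m j))⁻¹
        = 1 + ((B:ℝ) ^ (m j1))⁻¹ := by
      rw [Finset.sum_pair (Ne.symm hne)]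
      simp [hm0]
    have h2 : ∑ j ∈ ({j0, j1} : Finset (Fin (n+1))), ((B:ℝ) ^ (m j))⁻¹
        ≤ ∑ j ∈ Finset.univ.filter (fun j => x j ≠ 0), ((B:ℝ) ^ (m j))⁻¹ :=
      Finset.sum_le_sum_of_subset_of_nonneg hpair (fun j _ _ => by positivity)
    have h3 : (0:ℝ) < ((B:ℝ) ^ (m j1))⁻¹ := by positivity
    linarith
  have hx1 : x j0 = 1 := by
    have := hx.2
    rwa [Finset.sum_eq_single j0 (fun j _ hne => hzero j hne) (by simp)] at this
  have hxeq : x = Pi.single j0 1 := by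
    funext j
    by_cases hj : j = j0
    · subst hj; simp [hx1]
    · simp [Pi.single_eq_of_ne hj, hzero j hj]
  rw [hxeq]
  refine le_trans (hvert j0) (Finset.sum_nonneg fun j _ => ?_)
  have := hx.1 j
  rw [hxeq] at this
  positivity

lemma main_lemma (n B : ℕ) (hB : 2 ≤ B) (h : (Fin (n+1) → ℝ) → ℝ)
    (happrox : ApproxConvexWrt B (stdSimplex ℝ (Fin (n+1))) h 1)
    (hvert : ∀ j, h (Pi.single j 1) ≤ 0) :
    ∀ (N : ℕ) (m : Fin (n+1) → ℕ) (x : Fin (n+1) → ℝ),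
      x ∈ stdSimplex ℝ (Fin (n+1)) →
      (∑ j ∈ Finset.univ.filter (fun j => x j ≠ 0), ((B:ℝ) ^ (m j))⁻¹) ≤ 1 →
      (∑ j ∈ Finset.univ.filter (fun j => x j ≠ 0), m j) ≤ N →
      h x ≤ ∑ j, (m j : ℝ) * x j := by
  have hBpos : (0:ℝ) < B := by positivity
  intro N
  induction N with
  | zero =>
    intro m x hx hk hN
    obtain ⟨j0, hj0mem, hj0⟩ : ∃ j0 ∈ Finset.univ.filter (fun j => x j ≠ 0), x j0 ≠ 0 := by
      have : ∑ j, x j ≠ 0 := by rw [hx.2]; norm_num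
      obtain ⟨j0, _, hj0⟩ := Finset.exists_ne_zero_of_sum_ne_zero this
      exact ⟨j0, by simp [hj0], hj0⟩
    have hm0 : m j0 = 0 := by
      have h2 : m j0 ≤ ∑ j ∈ Finset.univ.filter (fun j => x j ≠ 0), m j :=
        Finset.single_le_sum (f := m) (fun j _ => Nat.zero_le _) hj0mem
      omega
    exact case1 n B hB h hvert m x hx hk j0 hj0 hm0
  | succ N ihN =>
    intro m x hx hk hN
    by_cases hcase : ∃ j0, x j0 ≠ 0 ∧ m j0 = 0
    · obtain ⟨j0, hj0, hm0⟩ := hcase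
      exact case1 n B hB h hvert m x hx hk j0 hj0 hm0
    push_neg at hcase
    set S : Finset (Fin (n+1)) := Finset.univ.filter (fun j => x j ≠ 0) with hSdef
    have hm1 : ∀ j ∈ S, 1 ≤ m j := by
      intro j hj
      have hxj : x j ≠ 0 := by simpa [hSdef] using hj
      have := hcase j hxj
      omega
    have hxpos : ∀ j ∈ S, 0 < x j := by
      intro j hj
      have hxj : x j ≠ 0 := by simpa [hSdef] using hj
      exact lt_of_le_of_ne (hx.1 j) (Ne.symm hxj)
    set C : ℕ := ∑ j ∈ S, m j with hCdef
    have hmC : ∀ j ∈ S, m j ≤ C := fun j hj =>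
      Finset.single_le_sum (f := fun j => m j) (fun j _ => Nat.zero_le _) hj
    set w : Fin (n+1) → ℕ := fun j => B ^ (C - (m j - 1)) with hwdef
    -- the real value of w
    have hwreal : ∀ j ∈ S, ((w j : ℝ)) = (B:ℝ) ^ (C+1) * ((B:ℝ) ^ (m j))⁻¹ := by
      intro j hj
      have h1 : 1 ≤ m j := hm1 j hj
      have h2 : m j ≤ C := hmC j hj
      have h3 : C - (m j - 1) = (C + 1) - m j := by omega
      have h4 : m j ≤ C + 1 := by omega
      simp only [hwdef]
      push_cast
      rw [h3, pow_sub₀ (B:ℝ) (ne_of_gt hBpos) h4]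
    have hsumw : ∑ j ∈ S, w j ≤ B ^ (C + 1) := by
      have hr : ((∑ j ∈ S, w j : ℕ) : ℝ) ≤ ((B ^ (C+1) : ℕ) : ℝ) := by
        push_cast
        calc ∑ j ∈ S, ((w j : ℝ)) = ∑ j ∈ S, (B:ℝ) ^ (C+1) * ((B:ℝ) ^ (m j))⁻¹ :=
              Finset.sum_congr rfl hwreal
          _ = (B:ℝ) ^ (C+1) * ∑ j ∈ S, ((B:ℝ) ^ (m j))⁻¹ := by rw [Finset.mul_sum]
          _ ≤ (B:ℝ) ^ (C+1) * 1 := by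
              apply mul_le_mul_of_nonneg_left hk (by positivity)
          _ = (B:ℝ) ^ (C+1) := by ring
      exact_mod_cast hr
    obtain ⟨f, hf⟩ := partition_lemma B C hB w S
      (fun j hj => ⟨C - (m j - 1), Nat.sub_le _ _, rfl⟩) hsumw
    set T : Fin B → Finset (Fin (n+1)) := fun i => S.filter (fun j => f j = i) with hTdef
    -- Kraft inequality per class
    have hkraft_i : ∀ i, ∑ j ∈ T i, ((B:ℝ) ^ (m j - 1))⁻¹ ≤ 1 := by
      intro i
      have hfi := hf i
      have hr : ((∑ j ∈ T i, w j : ℕ) : ℝ) ≤ ((B ^ C : ℕ) : ℝ) := by exact_mod_cast hfi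
      push_cast at hr
      have heq : ∀ j ∈ T i, ((w j : ℝ)) = (B:ℝ) ^ C * ((B:ℝ) ^ (m j - 1))⁻¹ := by
        intro j hj
        have hjS : j ∈ S := Finset.mem_of_mem_filter j hj
        have h2 : m j - 1 ≤ C := by have := hmC j hjS; omega
        simp only [hwdef]
        push_cast
        rw [pow_sub₀ (B:ℝ) (ne_of_gt hBpos) h2]
      rw [Finset.sum_congr rfl heq, ← Finset.mul_sum] at hr
      have hBC : (0:ℝ) < (B:ℝ) ^ C := by positivity
      calc ∑ j ∈ T i, ((B:ℝ) ^ (m j - 1))⁻¹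
          = ((B:ℝ) ^ C)⁻¹ * ((B:ℝ) ^ C * ∑ j ∈ T i, ((B:ℝ) ^ (m j - 1))⁻¹) := by
            field_simp
        _ ≤ ((B:ℝ) ^ C)⁻¹ * (B:ℝ) ^ C := by
            apply mul_le_mul_of_nonneg_left hr (by positivity)
        _ = 1 := by field_simp
    -- t and z and y
    set t : Fin B → ℝ := fun i => ∑ j ∈ T i, x j with htdef
    set z : Fin B → (Fin (n+1) → ℝ) := fun i j => if j ∈ T i then x j else 0 with hzdef
    set y : Fin B → (Fin (n+1) → ℝ) :=
      fun i => if t i = 0 then Pi.single 0 1 else (t i)⁻¹ • z i with hydef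
    have ht_nonneg : ∀ i, 0 ≤ t i :=
      fun i => Finset.sum_nonneg fun j hj => hx.1 j
    have hTempty : ∀ i, t i = 0 → T i = ∅ := by
      intro i hti
      by_contra hne
      obtain ⟨j, hj⟩ := Finset.nonempty_iff_ne_empty.2 hne
      have h1 : 0 < x j := hxpos j (Finset.mem_of_mem_filter j hj)
      have h2 : x j ≤ t i := Finset.single_le_sum (fun j _ => hx.1 j) hj
      rw [hti] at h2
      linarith
    have hsum_t : ∑ i, t i = 1 := by
      have h1 : ∑ i : Fin B, ∑ j ∈ T i, x j = ∑ j ∈ S, x j := by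
        simpa [hTdef] using Finset.sum_fiberwise S f x
      have h2 : ∑ j ∈ S, x j = ∑ j, x j := by
        rw [hSdef]
        exact Finset.sum_filter_ne_zero _
      rw [htdef, h1, h2, hx.2]
    have hy_simplex : ∀ i, y i ∈ stdSimplex ℝ (Fin (n+1)) := by
      intro i
      simp only [hydef]
      by_cases hti : t i = 0
      · rw [if_pos hti]
        constructor
        · intro j
          rcases eq_or_ne j 0 with rfl | hj
          · simp
          · simp [Pi.single_eq_of_ne hj]
        · simp [Finset.sum_pi_single']
      · rw [if_neg hti]
        constructor
        · intro j
          have : 0 ≤ z i j := by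
            simp only [hzdef]
            split <;> [exact hx.1 j; exact le_rfl]
          have h0 : 0 ≤ (t i)⁻¹ := inv_nonneg.2 (ht_nonneg i)
          simpa using mul_nonneg h0 this
        · have hz : ∑ j, z i j = t i := by
            rw [hzdef, htdef]
            simp [Finset.sum_ite_mem]
          simp only [Pi.smul_apply, smul_eq_mul]
          rw [← Finset.mul_sum, hz]
          field_simp
    have hpt : ∀ j, ∑ i, t i * y i j = x j := by
      intro j
      have h1 : ∀ i, t i * y i j = z i j := by
        intro i
        simp only [hydef]
        by_cases hti : t i = 0
        · rw [if_pos hti, hti]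
          have : z i j = 0 := by simp only [hzdef]; simp [hTempty i hti]
          simp [this]
        · rw [if_neg hti]
          simp only [Pi.smul_apply, smul_eq_mul]
          field_simp
      rw [Finset.sum_congr rfl (fun i _ => h1 i)]
      by_cases hjS : j ∈ S
      · have h2 : ∀ i : Fin B, z i j = if f j = i then x j else 0 := by
          intro i
          simp only [hzdef, hTdef, Finset.mem_filter]
          by_cases hfi : f j = i <;> simp [hfi, hjS]
        rw [Finset.sum_congr rfl (fun i _ => h2 i)]
        simp
      · have hxj : x j = 0 := by
          by_contra hc
          exact hjS (by simp [hSdef, hc])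
        have h2 : ∀ i : Fin B, z i j = 0 := by
          intro i
          simp only [hzdef, hTdef, Finset.mem_filter]
          split <;> simp [hxj]
        rw [Finset.sum_congr rfl (fun i _ => h2 i)]
        simp [hxj]
    have hxdecomp : ∑ i, t i • y i = x := by
      funext j
      have := hpt j
      simpa using this
    -- apply IH to each y i with t i ≠ 0
    have hIH : ∀ i, t i ≠ 0 → h (y i) ≤ ∑ j, ((m j - 1 : ℕ) : ℝ) * y i j := by
      intro i hti
      apply ihN (fun j => m j - 1) (y i) (hy_simplex i)
      · -- Kraft for y i
        have hsupp : Finset.univ.filter (fun j => y i j ≠ 0) ⊆ T i := by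
          intro j hj
          simp only [Finset.mem_filter, Finset.mem_univ, true_and] at hj
          simp only [hydef, if_neg hti, Pi.smul_apply, smul_eq_mul] at hj
          have : z i j ≠ 0 := fun hc => hj (by rw [hc, mul_zero])
          simp only [hzdef] at this
          by_contra hc
          simp [hc] at this
        calc ∑ j ∈ Finset.univ.filter (fun j => y i j ≠ 0), ((B:ℝ) ^ (m j - 1))⁻¹
            ≤ ∑ j ∈ T i, ((B:ℝ) ^ (m j - 1))⁻¹ :=
              Finset.sum_le_sum_of_subset_of_nonneg hsupp (fun j _ _ => by positivity)
          _ ≤ 1 := hkraft_i i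
      · -- measure
        have hsupp : Finset.univ.filter (fun j => y i j ≠ 0) ⊆ T i := by
          intro j hj
          simp only [Finset.mem_filter, Finset.mem_univ, true_and] at hj
          simp only [hydef, if_neg hti, Pi.smul_apply, smul_eq_mul] at hj
          have : z i j ≠ 0 := fun hc => hj (by rw [hc, mul_zero])
          simp only [hzdef] at this
          by_contra hc
          simp [hc] at this
        have h1 : ∑ j ∈ Finset.univ.filter (fun j => y i j ≠ 0), (m j - 1)
            ≤ ∑ j ∈ T i, (m j - 1) :=
          Finset.sum_le_sum_of_subset hsupp
        have h2 : ∑ j ∈ T i, (m j - 1) + (T i).card = ∑ j ∈ T i, m j := by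
          rw [Finset.card_eq_sum_ones, ← Finset.sum_add_distrib]
          apply Finset.sum_congr rfl
          intro j hj
          have := hm1 j (Finset.mem_of_mem_filter j hj)
          omega
        have h3 : 1 ≤ (T i).card := by
          rcases Finset.eq_empty_or_nonempty (T i) with he | hne
          · exfalso; apply hti; rw [htdef]; simp [he]
          · exact Finset.card_pos.2 hne
        have h4 : ∑ j ∈ T i, m j ≤ ∑ j ∈ S, m j :=
          Finset.sum_le_sum_of_subset (Finset.filter_subset _ _)
        have h5 : ∑ j ∈ S, m j ≤ N + 1 := by rw [← hCdef]; rw [hCdef]; exact hN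
        omega
    -- approximate convexity
    have hac := happrox y t hy_simplex ht_nonneg hsum_t
    rw [hxdecomp] at hac
    have hbound : ∑ i, t i * h (y i) ≤ ∑ i, t i * ∑ j, ((m j - 1 : ℕ) : ℝ) * y i j := by
      apply Finset.sum_le_sum
      intro i _
      by_cases hti : t i = 0
      · rw [hti]; simp
      · exact mul_le_mul_of_nonneg_left (hIH i hti) (ht_nonneg i)
    have hswap : ∑ i, t i * ∑ j, ((m j - 1 : ℕ) : ℝ) * y i j
        = ∑ j, ((m j - 1 : ℕ) : ℝ) * x j := by
      calc ∑ i, t i * ∑ j, ((m j - 1 : ℕ) : ℝ) * y i j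
          = ∑ i, ∑ j, ((m j - 1 : ℕ) : ℝ) * (t i * y i j) := by
            apply Finset.sum_congr rfl; intro i _
            rw [Finset.mul_sum]; apply Finset.sum_congr rfl; intro j _; ring
        _ = ∑ j, ∑ i, ((m j - 1 : ℕ) : ℝ) * (t i * y i j) := Finset.sum_comm
        _ = ∑ j, ((m j - 1 : ℕ) : ℝ) * x j := by
            apply Finset.sum_congr rfl; intro j _
            rw [← Finset.mul_sum, hpt j]
    have hfinal : ∑ j, ((m j - 1 : ℕ) : ℝ) * x j + 1 ≤ ∑ j, (m j : ℝ) * x j := by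
      have hA : ∑ j, (m j : ℝ) * x j = ∑ j ∈ S, (m j : ℝ) * x j := by
        rw [hSdef]
        symm
        apply Finset.sum_filter_of_ne
        intro j _ hne hc
        rw [hc, mul_zero] at hne
        exact hne rfl
      have hB' : ∑ j, ((m j - 1 : ℕ) : ℝ) * x j = ∑ j ∈ S, ((m j - 1 : ℕ) : ℝ) * x j := by
        rw [hSdef]
        symm
        apply Finset.sum_filter_of_ne
        intro j _ hne hc
        rw [hc, mul_zero] at hne
        exact hne rfl
      have hC' : ∀ j ∈ S, (m j : ℝ) * x j = ((m j - 1 : ℕ) : ℝ) * x j + x j := by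
        intro j hj
        have h1 := hm1 j hj
        have : ((m j - 1 : ℕ) : ℝ) = (m j : ℝ) - 1 := by
          push_cast [h1]; ring
        rw [this]; ring
      have hD : ∑ j ∈ S, x j = 1 := by
        rw [hSdef, Finset.sum_filter_ne_zero, hx.2]
      rw [hA, hB', Finset.sum_congr rfl hC', Finset.sum_add_distrib, hD]
    calc h x ≤ ∑ i, t i * h (y i) + 1 := hac
      _ ≤ ∑ i, t i * ∑ j, ((m j - 1 : ℕ) : ℝ) * y i j + 1 := by linarith
      _ = ∑ j, ((m j - 1 : ℕ) : ℝ) * x j + 1 := by rw [hswap]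
      _ ≤ ∑ j, (m j : ℝ) * x j := hfinal

theorem stmt2aux (n B : ℕ) (hB : 2 ≤ B)
    (h : (Fin (n + 1) → ℝ) → ℝ)
    (happrox : ApproxConvexWrt B (stdSimplex ℝ (Fin (n + 1))) h 1)
    (hvert : ∀ j : Fin (n + 1), h (Pi.single j 1) ≤ 0) :
    ∀ x ∈ stdSimplex ℝ (Fin (n + 1)),
      h x ≤ sInf { s : ℝ | ∃ m : Fin (n + 1) → ℕ,
        (∑ j, Real.sign (x j) * ((B : ℝ) ^ (m j))⁻¹) ≤ 1 ∧
        s = ∑ j, (m j : ℝ) * x j } := by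
  intro x hx
  have hBpos : (0:ℝ) < B := by positivity
  have hsign : ∀ (m : Fin (n+1) → ℕ),
      (∑ j, Real.sign (x j) * ((B : ℝ) ^ (m j))⁻¹)
        = ∑ j ∈ Finset.univ.filter (fun j => x j ≠ 0), ((B:ℝ) ^ (m j))⁻¹ := by
    intro m
    rw [Finset.sum_filter]
    apply Finset.sum_congr rfl
    intro j _
    by_cases hj : x j = 0
    · simp [hj, Real.sign_zero]
    · have hpos : 0 < x j := lt_of_le_of_ne (hx.1 j) (Ne.symm hj)
      rw [Real.sign_of_pos hpos]
      simp [hj]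
  apply le_csInf
  · refine ⟨∑ j, ((n : ℝ)) * x j, fun _ => n, ?_, rfl⟩
    rw [hsign]
    have h1 : ((n:ℝ) + 1) ≤ (B:ℝ) ^ n := by
      have h2 : n + 1 ≤ 2 ^ n := Nat.lt_two_pow_self (n := n)
      have h3 : (2:ℕ) ^ n ≤ B ^ n := Nat.pow_le_pow_left hB n
      exact_mod_cast le_trans h2 h3
    calc ∑ j ∈ Finset.univ.filter (fun j => x j ≠ 0), ((B:ℝ) ^ n)⁻¹
        ≤ ∑ j : Fin (n+1), ((B:ℝ) ^ n)⁻¹ :=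
          Finset.sum_le_sum_of_subset_of_nonneg (Finset.filter_subset _ _)
            (fun j _ _ => by positivity)
      _ = ((n:ℝ) + 1) * ((B:ℝ) ^ n)⁻¹ := by
          rw [Finset.sum_const, Finset.card_univ, Fintype.card_fin]
          push_cast
          ring
      _ ≤ (B:ℝ) ^ n * ((B:ℝ) ^ n)⁻¹ := by
          apply mul_le_mul_of_nonneg_right h1 (by positivity)
      _ = 1 := by field_simp
  · rintro s ⟨m, hkraft, rfl⟩
    rw [hsign] at hkraft
    exact main_lemma n B hB h happrox hvert
      (∑ j ∈ Finset.univ.filter (fun j => x j ≠ 0), m j) m x hx hkraft le_rfl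

theorem stmt2 (n B : ℕ) (hn : 1 ≤ n) (hB : 2 ≤ B)
    (h : (Fin (n + 1) → ℝ) → ℝ)
    (happrox : ApproxConvexWrt B (stdSimplex ℝ (Fin (n + 1))) h 1)
    (hvert : ∀ j : Fin (n + 1), h (Pi.single j 1) ≤ 0) :
    ∀ x ∈ stdSimplex ℝ (Fin (n + 1)), h x ≤ Efun n B x := by
  intro x hx
  exact stmt2aux n B hB h happrox hvert x hx
end

section
/- Let n ≥ 1 and B ≥ 2 be integers. The entropy function F(x) = −Σ_{j=0}^n x(j) log_B x(j) on Δ_n is approximately convex with respect to Δ_{B-1}. -/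
open Finset

/-- The entropy function `F(x) = -Σ x(j) log_B x(j)` (with `0 log_B 0 = 0`,
which holds automatically since `Real.logb B 0 = 0`). -/
noncomputable def entropyF (n B : ℕ) (x : Fin (n + 1) → ℝ) : ℝ :=
  -∑ j, x j * Real.logb B (x j)

lemma aux_split (c a b : ℝ) :
    (a * b) * Real.logb c (a * b) = b * (a * Real.logb c a) + a * (b * Real.logb c b) := by
  rcases eq_or_ne a 0 with ha | ha
  · simp [ha]
  rcases eq_or_ne b 0 with hb | hb
  · simp [hb]
  rw [Real.logb, Real.log_mul ha hb]
  unfold Real.logb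
  ring

lemma entropy_t_le (B : ℕ) (hB : 2 ≤ B) (t : Fin B → ℝ)
    (ht : ∀ i, 0 ≤ t i) (hsum : (∑ i, t i) = 1) :
    ∑ i, -(t i * Real.logb B (t i)) ≤ 1 := by
  have hB1 : (1:ℝ) < B := by exact_mod_cast hB.trans_lt' one_lt_two
  have hlogB : 0 < Real.log B := Real.log_pos hB1
  have hBpos : (0:ℝ) < B := by positivity
  have key : ∀ i, -(t i * Real.log (t i)) ≤ 1 / B - t i + t i * Real.log B := by
    intro i
    rcases (ht i).eq_or_lt with h | h
    · rw [← h]; simp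
    · have h2 : Real.log (1 / (B * t i)) ≤ 1 / (B * t i) - 1 :=
        Real.log_le_sub_one_of_pos (by positivity)
      rw [Real.log_div one_ne_zero (by positivity), Real.log_one,
        Real.log_mul (ne_of_gt hBpos) (ne_of_gt h)] at h2
      have h3 := mul_le_mul_of_nonneg_left h2 h.le
      have h4 : t i * (1 / ((B:ℝ) * t i) - 1) = 1 / B - t i := by
        field_simp
      rw [h4] at h3
      nlinarith
  have hsum2 : ∑ i, -(t i * Real.log (t i)) ≤ Real.log B := by
    calc ∑ i, -(t i * Real.log (t i)) ≤ ∑ i, (1 / (B:ℝ) - t i + t i * Real.log B) :=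
          Finset.sum_le_sum fun i _ => key i
      _ = Real.log B := by
          rw [Finset.sum_add_distrib, Finset.sum_sub_distrib, ← Finset.sum_mul, hsum]
          simp [Finset.sum_const, Finset.card_univ]
          field_simp
          norm_num
  have heq : ∑ i, -(t i * Real.logb B (t i))
      = (∑ i, -(t i * Real.log (t i))) / Real.log B := by
    rw [Finset.sum_div]
    refine Finset.sum_congr rfl fun i _ => ?_
    rw [Real.logb]; ring
  rw [heq, div_le_one hlogB]
  exact hsum2

theorem stmt3 (n B : ℕ) (hn : 1 ≤ n) (hB : 2 ≤ B) :
    ApproxConvexWrt B (stdSimplex ℝ (Fin (n + 1))) (entropyF n B) 1 := by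
  intro x t hx ht hsum
  have hB1 : (1:ℝ) < B := by exact_mod_cast hB.trans_lt' one_lt_two
  set y : Fin (n+1) → ℝ := fun j => ∑ i, t i * x i j with hy
  have hyeq : (∑ i, t i • x i) = y := by
    funext j; simp [hy, Finset.sum_apply]
  rw [hyeq]
  -- step A : pointwise bound
  have stepA : ∀ j, ∑ i, (t i * x i j) * Real.logb B (t i * x i j)
      ≤ y j * Real.logb B (y j) := by
    intro j
    have hrw : y j * Real.logb B (y j) = ∑ i, (t i * x i j) * Real.logb B (y j) := by
      rw [← Finset.sum_mul]
    rw [hrw]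
    refine Finset.sum_le_sum fun i _ => ?_
    rcases eq_or_lt_of_le (mul_nonneg (ht i) ((hx i).1 j)) with h | h
    · simp [← h]
    · have hle : t i * x i j ≤ y j :=
        Finset.single_le_sum (f := fun i => t i * x i j)
          (fun k _ => mul_nonneg (ht k) ((hx k).1 j)) (Finset.mem_univ i)
      exact mul_le_mul_of_nonneg_left (Real.logb_le_logb_of_le hB1 h hle) h.le
  -- main chain
  have main : entropyF n B y
      ≤ (∑ i, -(t i * Real.logb B (t i))) + ∑ i, t i * entropyF n B (x i) := by
    unfold entropyF
    have h1 : -∑ j, y j * Real.logb B (y j)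
        ≤ -∑ j, ∑ i, (t i * x i j) * Real.logb B (t i * x i j) :=
      neg_le_neg (Finset.sum_le_sum fun j _ => stepA j)
    refine h1.trans (le_of_eq ?_)
    rw [Finset.sum_comm]
    rw [← Finset.sum_neg_distrib, ← Finset.sum_add_distrib]
    refine Finset.sum_congr rfl fun i _ => ?_
    have h2 : ∑ j, (t i * x i j) * Real.logb B (t i * x i j)
        = ∑ j, (x i j * (t i * Real.logb B (t i)) + t i * (x i j * Real.logb B (x i j))) :=
      Finset.sum_congr rfl fun j _ => aux_split B (t i) (x i j)
    rw [h2, Finset.sum_add_distrib, ← Finset.sum_mul, (hx i).2, ← Finset.mul_sum]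
    ring
  have hH := entropy_t_le B hB t ht hsum
  calc entropyF n B y ≤ (∑ i, -(t i * Real.logb B (t i))) + ∑ i, t i * entropyF n B (x i) := main
    _ ≤ 1 + ∑ i, t i * entropyF n B (x i) := by linarith
    _ = (∑ i, t i * entropyF n B (x i)) + 1 := by ring
end

section
/- Let n ≥ 1 and B ≥ 2 be integers and let x ∈ Δ_n with support A = {j : x(j) ≠ 0}. Then the entropy F(x) = −Σ_{j=0}^n x(j) log_B x(j) satisfies the variational formula F(x) = inf{ Σ_{j∈A} y(j) x(j) : y(j) ≥ 0 real numbers with Σ_{j∈A} B^{-y(j)} ≤ 1 }, and this infimum is attained. -/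
open Finset

theorem stmt5 (n B : ℕ) (hn : 1 ≤ n) (hB : 2 ≤ B)
    (x : Fin (n + 1) → ℝ) (hx : x ∈ stdSimplex ℝ (Fin (n + 1)))
    (A : Finset (Fin (n + 1))) (hA : A = Finset.univ.filter (fun j => x j ≠ 0)) :
    IsLeast { s : ℝ | ∃ y : Fin (n + 1) → ℝ, (∀ j, 0 ≤ y j) ∧
        (∑ j ∈ A, ((B : ℝ) ^ (y j))⁻¹) ≤ 1 ∧
        s = ∑ j ∈ A, y j * x j }
      (entropyF n B x) := by
  obtain ⟨hx0, hx1⟩ := hx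
  have hB1 : (1:ℝ) < B := by exact_mod_cast lt_of_lt_of_le one_lt_two hB
  have hBpos : (0:ℝ) < B := lt_trans one_pos hB1
  have hL : 0 < Real.log B := Real.log_pos hB1
  have hxle : ∀ j, x j ≤ 1 := by
    intro j
    calc x j ≤ ∑ i, x i := Finset.single_le_sum (fun i _ => hx0 i) (mem_univ j)
    _ = 1 := hx1
  have hAx : ∀ j ∈ A, 0 < x j := by
    intro j hj; rw [hA] at hj
    simp only [mem_filter, mem_univ, true_and] at hj
    exact (hx0 j).lt_of_ne (Ne.symm hj)
  have hsumA : ∑ j ∈ A, x j = 1 := by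
    rw [hA]
    rw [Finset.sum_filter_ne_zero, hx1]
  have hent : entropyF n B x = -∑ j ∈ A, x j * Real.logb B (x j) := by
    rw [entropyF, hA, Finset.sum_filter_of_ne]
    intro j _ h hj
    exact h (by rw [hj]; simp)
  constructor
  · -- membership
    refine ⟨fun j => -Real.logb B (x j), ?_, ?_, ?_⟩
    · intro j
      simp only [Left.nonneg_neg_iff]
      exact Real.logb_nonpos hB1 (hx0 j) (hxle j)
    · have : ∀ j ∈ A, ((B:ℝ) ^ (-Real.logb B (x j)))⁻¹ = x j := by
        intro j hj
        rw [Real.rpow_neg hBpos.le, inv_inv, Real.rpow_logb hBpos (ne_of_gt hB1) (hAx j hj)]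
      rw [Finset.sum_congr rfl this, hsumA]
    · rw [hent, ← Finset.sum_neg_distrib]
      exact Finset.sum_congr rfl (fun j _ => by ring)
  · -- lower bound
    rintro s ⟨y, hy0, hyc, rfl⟩
    have key : ∀ j ∈ A,
        x j * Real.log (((B:ℝ) ^ (y j))⁻¹) - x j * Real.log (x j)
          ≤ ((B:ℝ) ^ (y j))⁻¹ - x j := by
      intro j hj
      have hz : (0:ℝ) < ((B:ℝ) ^ (y j))⁻¹ := by positivity
      have hxj := hAx j hj
      have h1 : Real.log (((B:ℝ) ^ (y j))⁻¹ / x j) ≤ ((B:ℝ) ^ (y j))⁻¹ / x j - 1 :=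
        Real.log_le_sub_one_of_pos (by positivity)
      rw [Real.log_div (ne_of_gt hz) (ne_of_gt hxj)] at h1
      have h2 := mul_le_mul_of_nonneg_left h1 hxj.le
      have h3 : x j * (((B:ℝ) ^ (y j))⁻¹ / x j - 1) = ((B:ℝ) ^ (y j))⁻¹ - x j := by
        field_simp
      linarith [h2, h3.le, h3.ge]
    have hsum := Finset.sum_le_sum key
    rw [Finset.sum_sub_distrib, Finset.sum_sub_distrib, hsumA] at hsum
    have hlogz : ∀ j ∈ A, x j * Real.log (((B:ℝ) ^ (y j))⁻¹) = -(y j * x j * Real.log B) := by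
      intro j hj
      rw [Real.log_inv, Real.log_rpow hBpos]
      ring
    rw [Finset.sum_congr rfl hlogz, Finset.sum_neg_distrib] at hsum
    have hsum2 : -(∑ j ∈ A, y j * x j * Real.log B) - ∑ j ∈ A, x j * Real.log (x j) ≤ 0 := by
      linarith [hyc]
    have hfactor : ∑ j ∈ A, y j * x j * Real.log B = (∑ j ∈ A, y j * x j) * Real.log B := by
      rw [← Finset.sum_mul]
    rw [hfactor] at hsum2
    rw [hent]
    have hlogb : ∑ j ∈ A, x j * Real.logb B (x j)
        = (∑ j ∈ A, x j * Real.log (x j)) / Real.log B := by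
      rw [Finset.sum_div]
      refine Finset.sum_congr rfl (fun j _ => ?_)
      rw [Real.logb, mul_div_assoc]
    rw [hlogb]
    rw [← neg_div, div_le_iff₀ hL]
    linarith [hsum2]
end

section
/- Let n ≥ 1 and B ≥ 2 be integers and let A be a nonempty subset of {0,1,…,n}. Then there exists a finite collection L(A) of tuples (m(j))_{j∈A} of nonnegative integers, each satisfying Σ_{j∈A} B^{-m(j)} ≤ 1, such that for every x ∈ Δ_n with supp x = A one has E(x) = min over (m(j)) ∈ L(A) of Σ_{j∈A} m(j) x(j). In particular, the restriction of E to each open facet {x ∈ Δ_n : supp x = A} is the minimum of finitely many linear functions, hence continuous and piecewise linear. -/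
open Finset

/-- The feasible set of exponent vectors supported on `A`. -/
def Feas (n B : ℕ) (A : Finset (Fin (n + 1))) : Set (Fin (n + 1) → ℕ) :=
  {m | (∀ j ∉ A, m j = 0) ∧ (∑ j ∈ A, ((B : ℝ) ^ (m j))⁻¹) ≤ 1}

/-- Minimal elements of the feasible set. -/
def MinFeas (n B : ℕ) (A : Finset (Fin (n + 1))) : Set (Fin (n + 1) → ℕ) :=
  {m | m ∈ Feas n B A ∧ ∀ m' ∈ Feas n B A, m' ≤ m → m' = m}

lemma minFeas_finite (n B : ℕ) (A : Finset (Fin (n + 1))) : (MinFeas n B A).Finite := by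
  have hanti : IsAntichain (· ≤ ·) (MinFeas n B A) := by
    intro a ha b hb hab hle
    exact hab (hb.2 a ha.1 hle)
  have hpwo : (MinFeas n B A).IsPWO := by
    exact Set.isPWO_of_wellQuasiOrderedLE (MinFeas n B A)
  exact hanti.finite_of_partiallyWellOrderedOn hpwo

lemma exists_minFeas_le (n B : ℕ) (A : Finset (Fin (n + 1))) :
    ∀ m ∈ Feas n B A, ∃ μ ∈ MinFeas n B A, μ ≤ m := by
  suffices h : ∀ N : ℕ, ∀ m ∈ Feas n B A, (∑ j, m j) ≤ N → ∃ μ ∈ MinFeas n B A, μ ≤ m by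
    intro m hm; exact h (∑ j, m j) m hm le_rfl
  intro N
  induction N with
  | zero =>
    intro m hm hsum
    refine ⟨m, ⟨hm, fun m' hm' hle => funext fun j => ?_⟩, le_rfl⟩
    have h1 : m j = 0 :=
      Finset.sum_eq_zero_iff.mp (Nat.le_zero.mp hsum) j (Finset.mem_univ j)
    have h2 : m' j ≤ m j := hle j
    omega
  | succ N ih =>
    intro m hm hsum
    by_cases hmin : ∀ m' ∈ Feas n B A, m' ≤ m → m' = m
    · exact ⟨m, ⟨hm, hmin⟩, le_rfl⟩
    · push_neg at hmin
      obtain ⟨m', hm', hle, hne⟩ := hmin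
      have hlt : (∑ j, m' j) < ∑ j, m j := by
        refine Finset.sum_lt_sum (fun j _ => hle j) ?_
        by_contra hcon
        push_neg at hcon
        exact hne (funext fun j => le_antisymm (hle j) (hcon j (Finset.mem_univ j)))
      obtain ⟨μ, hμ, hμle⟩ := ih m' hm' (by omega)
      exact ⟨μ, hμ, hμle.trans hle⟩

lemma feas_nonempty (n B : ℕ) (hB : 2 ≤ B) (A : Finset (Fin (n + 1))) :
    (fun j => if j ∈ A then n + 1 else 0) ∈ Feas n B A := by
  constructor
  · intro j hj; simp [hj]
  · have hBpos : (0 : ℝ) < (B : ℝ) ^ (n + 1) := by positivity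
    have hcard : (A.card : ℝ) ≤ (B : ℝ) ^ (n + 1) := by
      have h1 : A.card ≤ n + 1 := by
        simpa [Fintype.card_fin] using Finset.card_le_univ A
      have h2 : n + 1 ≤ 2 ^ (n + 1) := Nat.le_of_lt Nat.lt_two_pow_self
      have h3 : (2 : ℕ) ^ (n + 1) ≤ B ^ (n + 1) := Nat.pow_le_pow_left hB _
      have h4 : A.card ≤ B ^ (n + 1) := le_trans (le_trans h1 h2) h3
      exact_mod_cast h4
    have hcongr : ∀ j ∈ A,
        ((B : ℝ) ^ ((fun j => if j ∈ A then n + 1 else 0) j : ℕ))⁻¹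
          = ((B : ℝ) ^ (n + 1))⁻¹ := fun j hj => by simp [hj]
    rw [Finset.sum_congr rfl hcongr, Finset.sum_const, nsmul_eq_mul,
      ← div_eq_mul_inv, div_le_one hBpos]
    exact hcard

lemma continuous_inf'_aux {n : ℕ} (A : Finset (Fin (n + 1))) :
    ∀ (L : Finset (Fin (n + 1) → ℕ)) (hL : L.Nonempty),
      Continuous (fun x : Fin (n + 1) → ℝ =>
        L.inf' hL (fun m => ∑ j ∈ A, (m j : ℝ) * x j)) := by
  have hsingle : ∀ m : Fin (n + 1) → ℕ,
      Continuous (fun x : Fin (n + 1) → ℝ => ∑ j ∈ A, (m j : ℝ) * x j) :=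
    fun m => continuous_finset_sum _ fun j _ => continuous_const.mul (continuous_apply j)
  intro L
  induction L using Finset.cons_induction with
  | empty => intro h; simp at h
  | cons a s ha ih =>
    intro h
    rcases s.eq_empty_or_nonempty with rfl | hs
    · simpa using hsingle a
    · have heq : (fun x : Fin (n + 1) → ℝ =>
          (Finset.cons a s ha).inf' h (fun m => ∑ j ∈ A, (m j : ℝ) * x j))
          = fun x => (∑ j ∈ A, (a j : ℝ) * x j) ⊓
            s.inf' hs (fun m => ∑ j ∈ A, (m j : ℝ) * x j) := by
        funext x
        exact Finset.inf'_cons hs _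
      rw [heq]
      exact (hsingle a).min (ih hs)

theorem stmt8 (n B : ℕ) (hn : 1 ≤ n) (hB : 2 ≤ B)
    (A : Finset (Fin (n + 1))) (hA : A.Nonempty) :
    ∃ (L : Finset (Fin (n + 1) → ℕ)) (hL : L.Nonempty),
      (∀ m ∈ L, (∑ j ∈ A, ((B : ℝ) ^ (m j))⁻¹) ≤ 1) ∧
      (∀ x ∈ stdSimplex ℝ (Fin (n + 1)),
        Finset.univ.filter (fun j => x j ≠ 0) = A →
        Efun n B x = L.inf' hL (fun m => ∑ j ∈ A, (m j : ℝ) * x j)) ∧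
      ContinuousOn (Efun n B)
        {x | x ∈ stdSimplex ℝ (Fin (n + 1)) ∧
          Finset.univ.filter (fun j => x j ≠ 0) = A} := by
  classical
  set L : Finset (Fin (n + 1) → ℕ) := (minFeas_finite n B A).toFinset with hLdef
  have hmemL : ∀ m, m ∈ L ↔ m ∈ MinFeas n B A := by
    intro m; simp [hLdef, Set.Finite.mem_toFinset]
  obtain ⟨μ0, hμ0, _⟩ := exists_minFeas_le n B A _ (feas_nonempty n B hB A)
  have hL : L.Nonempty := ⟨μ0, (hmemL μ0).2 hμ0⟩
  -- the key pointwise equality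
  have key : ∀ x ∈ stdSimplex ℝ (Fin (n + 1)),
      Finset.univ.filter (fun j => x j ≠ 0) = A →
      Efun n B x = L.inf' hL (fun m => ∑ j ∈ A, (m j : ℝ) * x j) := by
    intro x hx hsupp
    have hxnn : ∀ j, 0 ≤ x j := hx.1
    have hmemA : ∀ j, j ∈ A ↔ x j ≠ 0 := by
      intro j
      rw [← hsupp]
      simp
    have hxposA : ∀ j ∈ A, 0 < x j := fun j hj =>
      lt_of_le_of_ne (hxnn j) (Ne.symm ((hmemA j).1 hj))
    have hxzero : ∀ j ∉ A, x j = 0 := by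
      intro j hj
      by_contra h
      exact hj ((hmemA j).2 h)
    -- rewriting the constraint sum
    have hconstr : ∀ m : Fin (n + 1) → ℕ,
        (∑ j, Real.sign (x j) * ((B : ℝ) ^ (m j))⁻¹) = ∑ j ∈ A, ((B : ℝ) ^ (m j))⁻¹ := by
      intro m
      rw [← Finset.sum_subset (Finset.subset_univ A)]
      · exact Finset.sum_congr rfl fun j hj => by
          rw [Real.sign_of_pos (hxposA j hj), one_mul]
      · intro j _ hj
        rw [hxzero j hj, Real.sign_zero, zero_mul]
    -- rewriting the value sum
    have hval : ∀ m : Fin (n + 1) → ℕ,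
        (∑ j, (m j : ℝ) * x j) = ∑ j ∈ A, (m j : ℝ) * x j := by
      intro m
      rw [← Finset.sum_subset (Finset.subset_univ A)]
      intro j _ hj
      rw [hxzero j hj, mul_zero]
    set S : Set ℝ := { s : ℝ | ∃ m : Fin (n + 1) → ℕ,
      (∑ j, Real.sign (x j) * ((B : ℝ) ^ (m j))⁻¹) ≤ 1 ∧
      s = ∑ j, (m j : ℝ) * x j } with hSdef
    have hbdd : BddBelow S := by
      refine ⟨0, fun s hs => ?_⟩
      obtain ⟨m, _, rfl⟩ := hs
      exact Finset.sum_nonneg fun j _ => mul_nonneg (Nat.cast_nonneg _) (hxnn j)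
    have hmemS : ∀ m ∈ Feas n B A, (∑ j ∈ A, (m j : ℝ) * x j) ∈ S := by
      intro m hm
      exact ⟨m, by rw [hconstr]; exact hm.2, (hval m).symm⟩
    have hSne : S.Nonempty := ⟨_, hmemS _ (feas_nonempty n B hB A)⟩
    refine le_antisymm ?_ ?_
    · obtain ⟨m, hmL, heq⟩ := Finset.exists_mem_eq_inf' hL
        (fun m => ∑ j ∈ A, (m j : ℝ) * x j)
      rw [heq]
      exact csInf_le hbdd (hmemS m ((hmemL m).1 hmL).1)
    · refine le_csInf hSne ?_
      rintro s ⟨m, hmc, rfl⟩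
      set m₀ : Fin (n + 1) → ℕ := fun j => if j ∈ A then m j else 0 with hm₀
      have hm₀F : m₀ ∈ Feas n B A := by
        constructor
        · intro j hj; simp [hm₀, hj]
        · calc (∑ j ∈ A, ((B : ℝ) ^ (m₀ j))⁻¹)
              = ∑ j ∈ A, ((B : ℝ) ^ (m j))⁻¹ := Finset.sum_congr rfl fun j hj => by
                simp [hm₀, hj]
            _ ≤ 1 := by rw [← hconstr]; exact hmc
      obtain ⟨μ, hμ, hμle⟩ := exists_minFeas_le n B A m₀ hm₀F
      have h1 : L.inf' hL (fun m => ∑ j ∈ A, (m j : ℝ) * x j)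
          ≤ ∑ j ∈ A, (μ j : ℝ) * x j :=
        Finset.inf'_le _ ((hmemL μ).2 hμ)
      have h2 : (∑ j ∈ A, (μ j : ℝ) * x j) ≤ ∑ j ∈ A, (m j : ℝ) * x j := by
        refine Finset.sum_le_sum fun j hj => ?_
        have : μ j ≤ m₀ j := hμle j
        have : μ j ≤ m j := by simpa [hm₀, hj] using this
        exact mul_le_mul_of_nonneg_right (by exact_mod_cast this) (hxnn j)
      rw [hval m]
      exact h1.trans h2
  refine ⟨L, hL, ?_, key, ?_⟩
  · intro m hm
    exact ((hmemL m).1 hm).1.2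
  · exact (continuous_inf'_aux A L hL).continuousOn.congr fun x hx => key x hx.1 hx.2
end

section
/- Let n ≥ 1 and B ≥ 2 be integers. Suppose (m_0,…,m_n) is a feasible tuple (nonnegative integers with Σ_{k=0}^n B^{-m_k} ≤ 1) such that Σ_{k=0}^n m_k x_k = E(x) for some x in the interior of Δ_n (all coordinates strictly positive). If (m_0',…,m_n') is any feasible tuple with m_k' ≤ m_k for all 0 ≤ k ≤ n, then (m_0',…,m_n') = (m_0,…,m_n). -/
open Finset

theorem stmt9 (n B : ℕ) (hn : 1 ≤ n) (hB : 2 ≤ B)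
    (m : Fin (n + 1) → ℕ) (hfeas : (∑ k, ((B : ℝ) ^ (m k))⁻¹) ≤ 1)
    (x : Fin (n + 1) → ℝ) (hxpos : ∀ k, 0 < x k) (hxsum : (∑ k, x k) = 1)
    (hmin : (∑ k, (m k : ℝ) * x k) = Efun n B x)
    (m' : Fin (n + 1) → ℕ) (hfeas' : (∑ k, ((B : ℝ) ^ (m' k))⁻¹) ≤ 1)
    (hle : ∀ k, m' k ≤ m k) :
    m' = m := by
  have hsign : ∀ j, Real.sign (x j) = 1 := fun j => Real.sign_of_pos (hxpos j)
  have hmem : (∑ k, (m' k : ℝ) * x k) ∈ { s : ℝ | ∃ m : Fin (n + 1) → ℕ,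
      (∑ j, Real.sign (x j) * ((B : ℝ) ^ (m j))⁻¹) ≤ 1 ∧
      s = ∑ j, (m j : ℝ) * x j } := by
    refine ⟨m', ?_, rfl⟩
    simpa [hsign] using hfeas'
  have hbdd : BddBelow { s : ℝ | ∃ m : Fin (n + 1) → ℕ,
      (∑ j, Real.sign (x j) * ((B : ℝ) ^ (m j))⁻¹) ≤ 1 ∧
      s = ∑ j, (m j : ℝ) * x j } := by
    refine ⟨0, fun s hs => ?_⟩
    obtain ⟨μ, _, rfl⟩ := hs
    exact Finset.sum_nonneg fun j _ =>
      mul_nonneg (Nat.cast_nonneg _) (hxpos j).le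
  have h1 : (∑ k, (m k : ℝ) * x k) ≤ ∑ k, (m' k : ℝ) * x k := by
    rw [hmin]; exact csInf_le hbdd hmem
  have h2 : ∀ k ∈ Finset.univ, (m' k : ℝ) * x k ≤ (m k : ℝ) * x k := fun k _ =>
    mul_le_mul_of_nonneg_right (by exact_mod_cast hle k) (hxpos k).le
  have hsum : (∑ k, (m' k : ℝ) * x k) = ∑ k, (m k : ℝ) * x k :=
    le_antisymm (Finset.sum_le_sum h2) h1
  have heq := (Finset.sum_eq_sum_iff_of_le h2).mp hsum
  funext k
  have h3 := heq k (Finset.mem_univ k)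
  have hx := (hxpos k).ne'
  have : (m' k : ℝ) = m k := mul_right_cancel₀ hx h3
  exact_mod_cast this
end

section
/- Let n ≥ 0 and B ≥ 2 be integers. Let m_0 ≥ m_1 ≥ … ≥ m_n be a non-increasing sequence of n+1 positive integers and let C > 0 be a real number such that Σ_{k=0}^n B^{-m_k} ≤ C, and such that (m_0,…,m_n) is extreme for (n,C): whenever m_0',…,m_n' are positive integers with m_k' ≤ m_k for all k and Σ_{k=0}^n B^{-m_k'} ≤ C, one has (m_0',…,m_n') = (m_0,…,m_n). Let η(n,C) = min{ j ≥ 2 : C·B^j ≥ n + B } (explicitly, η(n,C) = max{2, ⌈log_B((n+B)/C)⌉}). Then m_n < η(n,C). -/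
open Finset

theorem stmt10 (n B : ℕ) (hB : 2 ≤ B)
    (m : Fin (n + 1) → ℕ) (hmono : ∀ i j : Fin (n + 1), i ≤ j → m j ≤ m i)
    (hpos : ∀ k, 1 ≤ m k) (C : ℝ) (hC : 0 < C)
    (hsum : (∑ k, ((B : ℝ) ^ (m k))⁻¹) ≤ C)
    (hext : ∀ m' : Fin (n + 1) → ℕ, (∀ k, 1 ≤ m' k) → (∀ k, m' k ≤ m k) →
      (∑ k, ((B : ℝ) ^ (m' k))⁻¹) ≤ C → m' = m) :
    m (Fin.last n) < sInf {j : ℕ | 2 ≤ j ∧ ((n : ℝ) + B) ≤ C * (B : ℝ) ^ j} := by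
  classical
  have hB1 : (1:ℝ) < (B:ℝ) := by
    have : (2:ℝ) ≤ (B:ℝ) := by exact_mod_cast hB
    linarith
  have hB0 : (0:ℝ) < (B:ℝ) := by linarith
  set S : Set ℕ := {j : ℕ | 2 ≤ j ∧ ((n : ℝ) + B) ≤ C * (B : ℝ) ^ j} with hS
  obtain ⟨j0, hj0⟩ := pow_unbounded_of_one_lt (((n:ℝ)+B)/C) hB1
  have hSne : S.Nonempty := by
    refine ⟨max 2 j0, le_max_left _ _, ?_⟩
    have hle : (B:ℝ)^j0 ≤ (B:ℝ)^(max 2 j0) :=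
      pow_le_pow_right₀ hB1.le (le_max_right _ _)
    have h1 : ((n:ℝ)+B)/C < (B:ℝ)^(max 2 j0) := lt_of_lt_of_le hj0 hle
    calc ((n:ℝ)+B) = ((n:ℝ)+B)/C * C := by field_simp
      _ ≤ (B:ℝ)^(max 2 j0) * C := by nlinarith
      _ = C * (B:ℝ)^(max 2 j0) := by ring
  by_contra h
  push_neg at h
  set η := sInf S with hηdef
  obtain ⟨hη2, hηC⟩ := Nat.sInf_mem hSne
  have hmlast : η ≤ m (Fin.last n) := h
  set N := Fin.last n with hN
  set m' : Fin (n+1) → ℕ := fun k => if k = N then m k - 1 else m k with hm'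
  have hpos' : ∀ k, 1 ≤ m' k := by
    intro k; simp only [hm']
    split
    · rename_i heq; subst heq; omega
    · exact hpos k
  have hle' : ∀ k, m' k ≤ m k := by
    intro k; simp only [hm']; split <;> omega
  have hηpos : (0:ℝ) < (B:ℝ)^η := pow_pos hB0 _
  have hsum' : (∑ k, ((B : ℝ) ^ (m' k))⁻¹) ≤ C := by
    rw [Fin.sum_univ_castSucc]
    have hterm : ∀ k : Fin n, ((B:ℝ) ^ (m' k.castSucc))⁻¹ ≤ ((B:ℝ)^η)⁻¹ := by
      intro k
      have hne : k.castSucc ≠ N := (Fin.castSucc_lt_last k).ne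
      have hkge : η ≤ m k.castSucc :=
        le_trans hmlast (hmono _ _ (Fin.le_last _))
      simp only [hm', if_neg hne]
      exact inv_anti₀ hηpos (pow_le_pow_right₀ hB1.le hkge)
    have h1 : (∑ k : Fin n, ((B:ℝ) ^ (m' k.castSucc))⁻¹) ≤ n * ((B:ℝ)^η)⁻¹ := by
      calc (∑ k : Fin n, ((B:ℝ) ^ (m' k.castSucc))⁻¹)
          ≤ ∑ _k : Fin n, ((B:ℝ)^η)⁻¹ := Finset.sum_le_sum (fun k _ => hterm k)
        _ = n * ((B:ℝ)^η)⁻¹ := by simp [mul_comm]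
    have h2 : ((B:ℝ) ^ (m' N))⁻¹ ≤ (B:ℝ) * ((B:ℝ)^η)⁻¹ := by
      have hm'N : m' N = m N - 1 := by simp [hm']
      have hge : η - 1 ≤ m' N := by omega
      have hpow : (B:ℝ)^(η-1) ≤ (B:ℝ)^(m' N) := pow_le_pow_right₀ hB1.le hge
      have hinv : ((B:ℝ)^(m' N))⁻¹ ≤ ((B:ℝ)^(η-1))⁻¹ :=
        inv_anti₀ (pow_pos hB0 _) hpow
      have heq : (B:ℝ) * ((B:ℝ)^η)⁻¹ = ((B:ℝ)^(η-1))⁻¹ := by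
        have : (B:ℝ)^η = (B:ℝ)^(η-1) * B := by
          rw [← pow_succ]; congr 1; omega
        rw [this]
        field_simp
      rw [heq]; exact hinv
    have h3 : ((n:ℝ) + B) * ((B:ℝ)^η)⁻¹ ≤ C := by
      rw [← div_eq_mul_inv, div_le_iff₀ hηpos]
      linarith [hηC]
    calc (∑ k : Fin n, ((B:ℝ) ^ (m' k.castSucc))⁻¹) + ((B:ℝ) ^ (m' N))⁻¹
        ≤ n * ((B:ℝ)^η)⁻¹ + (B:ℝ) * ((B:ℝ)^η)⁻¹ := add_le_add h1 h2
      _ = ((n:ℝ) + B) * ((B:ℝ)^η)⁻¹ := by ring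
      _ ≤ C := h3
  have := hext m' hpos' hle' hsum'
  have hNval : m' N = m N := by rw [this]
  simp only [hm', if_pos rfl] at hNval
  omega
end

section
/- Let n ≥ 1 and B ≥ 2 be integers. The set of extreme tuples E(n,B) = { (m_0,…,m_n) : m_k nonnegative integers, Σ_{k=0}^n B^{-m_k} ≤ 1, and Σ_{k=0}^n m_k x_k = E(x) for some x in the interior of Δ_n } is finite. -/
open Finset

private lemma invPowAntiAux (B : ℕ) (hB : 2 ≤ B) {a b : ℕ} (h : a ≤ b) :
    ((B:ℝ) ^ b)⁻¹ ≤ ((B:ℝ) ^ a)⁻¹ := by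
  have h1 : (1:ℝ) ≤ (B:ℝ) := by exact_mod_cast (by omega : 1 ≤ B)
  have h2 : (B:ℝ)^a ≤ (B:ℝ)^b := pow_le_pow_right₀ h1 h
  have h3 : (0:ℝ) < (B:ℝ)^a := by positivity
  exact inv_anti₀ h3 h2

private lemma aux_step (n B : ℕ) (hB : 2 ≤ B) (m : Fin (n+1) → ℕ)
    (hT : (∑ j, ((B:ℝ) ^ (m j))⁻¹) ≤ 1)
    (hmin : ∀ k, 1 ≤ m k →
      1 < (∑ j, ((B:ℝ) ^ (m j))⁻¹) + ((B:ℝ) - 1) * ((B:ℝ) ^ (m k))⁻¹)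
    (t : ℕ) (ht : ∃ j, t < m j) :
    ∃ j, t < m j ∧ m j ≤ t + n + 1 := by
  classical
  have hB0 : (0:ℝ) < (B:ℝ) := by exact_mod_cast (by omega : 0 < B)
  have hB1 : (1:ℝ) < (B:ℝ) := by exact_mod_cast (by omega : 1 < B)
  obtain ⟨j0, hj0⟩ := ht
  set U : Finset (Fin (n+1)) := univ.filter (fun j => t < m j) with hUdef
  set Unot : Finset (Fin (n+1)) := univ.filter (fun j => ¬ t < m j) with hUnotdef
  have hUne : U.Nonempty := ⟨j0, by simp [hUdef, hj0]⟩
  obtain ⟨ks, hksU, hksmin⟩ := U.exists_min_image m hUne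
  obtain ⟨K, _, hKmax⟩ :=
    (univ : Finset (Fin (n+1))).exists_max_image m ⟨j0, mem_univ j0⟩
  have htks : t < m ks := by
    have := hksU; simp [hUdef] at this; exact this
  have htK : t < m K := lt_of_lt_of_le hj0 (hKmax j0 (mem_univ j0))
  -- split of the total sum
  have hsplit : (∑ j ∈ U, ((B:ℝ) ^ (m j))⁻¹) + (∑ j ∈ Unot, ((B:ℝ) ^ (m j))⁻¹)
      = ∑ j, ((B:ℝ) ^ (m j))⁻¹ :=
    Finset.sum_filter_add_sum_filter_not univ _ _
  set A := ∑ j ∈ U, ((B:ℝ) ^ (m j))⁻¹ with hAdef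
  set Sl := ∑ j ∈ Unot, ((B:ℝ) ^ (m j))⁻¹ with hSldef
  have hApos : 0 < A := by
    apply Finset.sum_pos (fun j _ => by positivity) hUne
  have hSl_lt_one : Sl < 1 := by linarith
  -- (a) Sl ≤ 1 - (B^t)⁻¹
  have hSl_le : Sl ≤ 1 - ((B:ℝ)^t)⁻¹ := by
    set L : ℕ := ∑ j ∈ Unot, B ^ (t - m j) with hLdef
    have hLcast : (L : ℝ) = (B:ℝ)^t * Sl := by
      rw [hLdef, hSldef, Finset.mul_sum]
      push_cast
      refine Finset.sum_congr rfl (fun j hj => ?_)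
      have hjle : m j ≤ t := by
        simp [hUnotdef] at hj; omega
      have hEq : (B:ℝ)^t = (B:ℝ)^(t - m j) * (B:ℝ)^(m j) := by
        rw [← pow_add]; congr 1; omega
      rw [hEq, mul_assoc, mul_inv_cancel₀ (by positivity), mul_one]
    have hLlt : L < B ^ t := by
      have : (L:ℝ) < ((B:ℝ))^t := by
        rw [hLcast]
        nlinarith [pow_pos hB0 t]
      exact_mod_cast (by push_cast; exact this : (L:ℝ) < ((B^t : ℕ) : ℝ))
    have hLle : (L:ℝ) ≤ (B:ℝ)^t - 1 := by
      have : (L:ℝ) + 1 ≤ ((B^t : ℕ):ℝ) := by exact_mod_cast hLlt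
      push_cast at this
      linarith
    have hpt : (0:ℝ) < (B:ℝ)^t := by positivity
    have hinv : ((B:ℝ)^t)⁻¹ * (B:ℝ)^t = 1 := inv_mul_cancel₀ (by positivity)
    nlinarith [hLcast, hLle]
  -- (b) 1 - T < (B-1) * (B^(t+1))⁻¹
  have hKmin := hmin K (by omega)
  have hKt : ((B:ℝ) ^ (m K))⁻¹ ≤ ((B:ℝ) ^ (t+1))⁻¹ := invPowAntiAux B hB (by omega)
  have hb1 : (0:ℝ) ≤ (B:ℝ) - 1 := by linarith
  have hσ : 1 - (∑ j, ((B:ℝ) ^ (m j))⁻¹) < ((B:ℝ) - 1) * ((B:ℝ) ^ (t+1))⁻¹ := by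
    have := mul_le_mul_of_nonneg_left hKt hb1
    linarith
  -- (c) A ≤ (n+1) * (B^(m ks))⁻¹
  have hA_le : A ≤ ((n:ℝ)+1) * ((B:ℝ) ^ (m ks))⁻¹ := by
    have h1 : A ≤ ∑ _j ∈ U, ((B:ℝ) ^ (m ks))⁻¹ := by
      refine Finset.sum_le_sum (fun j hj => ?_)
      exact invPowAntiAux B hB (hksmin j hj)
    have h2 : (∑ _j ∈ U, ((B:ℝ) ^ (m ks))⁻¹) = (U.card : ℝ) * ((B:ℝ) ^ (m ks))⁻¹ := by
      rw [Finset.sum_const, nsmul_eq_mul]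
    have h3 : (U.card : ℝ) ≤ (n:ℝ)+1 := by
      have : U.card ≤ n+1 := by
        have := Finset.card_filter_le (univ : Finset (Fin (n+1))) (fun j => t < m j)
        simpa using this
      exact_mod_cast this
    have h4 : (0:ℝ) < ((B:ℝ) ^ (m ks))⁻¹ := by positivity
    calc A ≤ (U.card : ℝ) * ((B:ℝ) ^ (m ks))⁻¹ := by rw [← h2]; exact h1
      _ ≤ ((n:ℝ)+1) * ((B:ℝ) ^ (m ks))⁻¹ := mul_le_mul_of_nonneg_right h3 h4.le
  -- combine: (B^(t+1))⁻¹ < (n+1) * (B^(m ks))⁻¹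
  have hpow_t : ((B:ℝ)^t)⁻¹ = (B:ℝ) * ((B:ℝ)^(t+1))⁻¹ := by
    rw [pow_succ]
    field_simp
  have key : ((B:ℝ)^(t+1))⁻¹ < ((n:ℝ)+1) * ((B:ℝ) ^ (m ks))⁻¹ := by
    have h1 : ((B:ℝ)^t)⁻¹ ≤ (1 - (∑ j, ((B:ℝ) ^ (m j))⁻¹)) + A := by
      have : Sl = (∑ j, ((B:ℝ) ^ (m j))⁻¹) - A := by linarith
      rw [this] at hSl_le
      linarith
    rw [hpow_t] at h1
    linarith
  -- conclude m ks ≤ t + n + 1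
  refine ⟨ks, htks, ?_⟩
  by_contra hcon
  push_neg at hcon
  have hmks : t+n+2 ≤ m ks := by omega
  have hle : ((B:ℝ)^(m ks))⁻¹ ≤ ((B:ℝ)^(t+n+2))⁻¹ := invPowAntiAux B hB hmks
  have hn1 : ((n:ℝ)+1) ≤ (B:ℝ)^(n+1) := by
    have h2 : n+1 < 2^(n+1) := Nat.lt_two_pow_self
    have h2B : (2:ℕ)^(n+1) ≤ B^(n+1) := Nat.pow_le_pow_left hB _
    have : n+1 ≤ B^(n+1) := le_of_lt (lt_of_lt_of_le h2 h2B)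
    exact_mod_cast this
  have hpos : (0:ℝ) < ((B:ℝ)^(t+n+2))⁻¹ := by positivity
  have hEq : (B:ℝ)^(n+1) * ((B:ℝ)^(t+n+2))⁻¹ = ((B:ℝ)^(t+1))⁻¹ := by
    have e : (B:ℝ)^(t+n+2) = (B:ℝ)^(n+1) * (B:ℝ)^(t+1) := by
      rw [← pow_add]; congr 1; omega
    rw [e, mul_inv, ← mul_assoc, mul_inv_cancel₀ (by positivity), one_mul]
  have c1 : ((n:ℝ)+1) * ((B:ℝ)^(m ks))⁻¹ ≤ ((n:ℝ)+1) * ((B:ℝ)^(t+n+2))⁻¹ :=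
    mul_le_mul_of_nonneg_left hle (by positivity)
  have c2 : ((n:ℝ)+1) * ((B:ℝ)^(t+n+2))⁻¹ ≤ (B:ℝ)^(n+1) * ((B:ℝ)^(t+n+2))⁻¹ :=
    mul_le_mul_of_nonneg_right hn1 hpos.le
  linarith

private lemma aux_core (n B : ℕ) (hB : 2 ≤ B) (m : Fin (n+1) → ℕ)
    (hT : (∑ j, ((B:ℝ) ^ (m j))⁻¹) ≤ 1)
    (hmin : ∀ k, 1 ≤ m k →
      1 < (∑ j, ((B:ℝ) ^ (m j))⁻¹) + ((B:ℝ) - 1) * ((B:ℝ) ^ (m k))⁻¹) :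
    ∀ k, m k ≤ (n+1)^2 := by
  intro k
  by_contra hk
  push_neg at hk
  have hwit : ∀ i : Fin (n+2), ∃ j, i.val * (n+1) < m j := by
    intro i
    refine ⟨k, ?_⟩
    have h1 : i.val ≤ n+1 := by omega
    have h2 : i.val * (n+1) ≤ (n+1) * (n+1) := Nat.mul_le_mul_right _ h1
    have h3 : (n+1) * (n+1) = (n+1)^2 := (sq (n+1)).symm
    omega
  have hstep := fun (i : Fin (n+2)) =>
    aux_step n B hB m hT hmin (i.val * (n+1)) (hwit i)
  choose F hF1 hF2 using hstep
  have hinj : Function.Injective F := by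
    intro i i' hEq
    have a1 := hF1 i
    have a2 := hF2 i
    have a3 := hF1 i'
    have a4 := hF2 i'
    rw [hEq] at a1 a2
    have l1 : i.val ≤ i'.val := by
      by_contra h
      push_neg at h
      have h5 : (i'.val+1) * (n+1) ≤ i.val * (n+1) := Nat.mul_le_mul_right _ (by omega)
      have h6 : (i'.val+1) * (n+1) = i'.val * (n+1) + (n+1) := by ring
      linarith
    have l2 : i'.val ≤ i.val := by
      by_contra h
      push_neg at h
      have h5 : (i.val+1) * (n+1) ≤ i'.val * (n+1) := Nat.mul_le_mul_right _ (by omega)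
      have h6 : (i.val+1) * (n+1) = i.val * (n+1) + (n+1) := by ring
      linarith
    exact Fin.ext (le_antisymm l1 l2)
  have hcard := Fintype.card_le_of_injective F hinj
  simp [Fintype.card_fin] at hcard

theorem stmt11 (n B : ℕ) (hn : 1 ≤ n) (hB : 2 ≤ B) :
    Set.Finite { m : Fin (n + 1) → ℕ |
      (∑ k, ((B : ℝ) ^ (m k))⁻¹) ≤ 1 ∧
      ∃ x : Fin (n + 1) → ℝ, (∀ k, 0 < x k) ∧ (∑ k, x k) = 1 ∧
        (∑ k, (m k : ℝ) * x k) = Efun n B x } := by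
  classical
  have hfin : Set.Finite {m : Fin (n+1) → ℕ | ∀ k, m k ≤ (n+1)^2} := by
    have hsub : {m : Fin (n+1) → ℕ | ∀ k, m k ≤ (n+1)^2}
        ⊆ Set.pi Set.univ (fun _ : Fin (n+1) => Set.Iic ((n+1)^2)) := by
      intro m hm k _
      exact hm k
    exact (Set.Finite.pi (fun _ => Set.finite_Iic _)).subset hsub
  refine hfin.subset ?_
  rintro m ⟨hfeas, x, hxpos, hxsum, heq⟩
  simp only [Set.mem_setOf_eq]
  have hB0 : (0:ℝ) < (B:ℝ) := by exact_mod_cast (by omega : 0 < B)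
  have hmin : ∀ k, 1 ≤ m k →
      1 < (∑ j, ((B:ℝ) ^ (m j))⁻¹) + ((B:ℝ) - 1) * ((B:ℝ) ^ (m k))⁻¹ := by
    intro k hk
    by_contra hc
    push_neg at hc
    set m' := Function.update m k (m k - 1) with hm'def
    have hsplit : ∀ f : Fin (n+1) → ℝ, (∑ j, f j) = f k + ∑ j ∈ univ.erase k, f j :=
      fun f => (Finset.add_sum_erase univ f (mem_univ k)).symm
    have hub : ∀ j ∈ univ.erase k, m' j = m j :=
      fun j hj => Function.update_of_ne (Finset.ne_of_mem_erase hj) _ _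
    have hupk : m' k = m k - 1 := Function.update_self _ _ _
    have hpow : (B:ℝ) ^ (m k) = (B:ℝ) ^ (m k - 1) * (B:ℝ) := by
      rw [← pow_succ]; congr 1; omega
    have hpk : ((B:ℝ) ^ (m k - 1))⁻¹ = (B:ℝ) * ((B:ℝ) ^ (m k))⁻¹ := by
      rw [hpow, mul_inv, mul_comm ((B:ℝ) ^ (m k - 1))⁻¹ ((B:ℝ))⁻¹, ← mul_assoc,
        mul_inv_cancel₀ (ne_of_gt hB0), one_mul]
    have hTm' : (∑ j, ((B:ℝ) ^ (m' j))⁻¹)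
        = (∑ j, ((B:ℝ) ^ (m j))⁻¹) + ((B:ℝ)-1) * ((B:ℝ) ^ (m k))⁻¹ := by
      rw [hsplit (fun j => ((B:ℝ) ^ (m' j))⁻¹), hsplit (fun j => ((B:ℝ) ^ (m j))⁻¹)]
      have hsum1 : (∑ j ∈ univ.erase k, ((B:ℝ) ^ (m' j))⁻¹)
          = ∑ j ∈ univ.erase k, ((B:ℝ) ^ (m j))⁻¹ :=
        Finset.sum_congr rfl (fun j hj => by rw [hub j hj])
      rw [hsum1, hupk, hpk]
      ring
    have hobj : (∑ j, (m' j : ℝ) * x j) = (∑ j, (m j : ℝ) * x j) - x k := by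
      rw [hsplit (fun j => (m' j : ℝ) * x j), hsplit (fun j => (m j : ℝ) * x j)]
      have hsum2 : (∑ j ∈ univ.erase k, (m' j : ℝ) * x j)
          = ∑ j ∈ univ.erase k, (m j : ℝ) * x j :=
        Finset.sum_congr rfl (fun j hj => by rw [hub j hj])
      rw [hsum2, hupk, Nat.cast_sub hk, Nat.cast_one]
      ring
    have hmem : (∑ j, (m' j : ℝ) * x j) ∈ { s : ℝ | ∃ mm : Fin (n + 1) → ℕ,
        (∑ j, Real.sign (x j) * ((B : ℝ) ^ (mm j))⁻¹) ≤ 1 ∧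
        s = ∑ j, (mm j : ℝ) * x j } := by
      refine ⟨m', ?_, rfl⟩
      have hsign : ∀ j, Real.sign (x j) = 1 := fun j => Real.sign_of_pos (hxpos j)
      simp only [hsign, one_mul]
      rw [hTm']
      exact hc
    have hbdd : BddBelow { s : ℝ | ∃ mm : Fin (n + 1) → ℕ,
        (∑ j, Real.sign (x j) * ((B : ℝ) ^ (mm j))⁻¹) ≤ 1 ∧
        s = ∑ j, (mm j : ℝ) * x j } := by
      refine ⟨0, fun s hs => ?_⟩
      obtain ⟨mm, -, rfl⟩ := hs
      exact Finset.sum_nonneg (fun j _ => mul_nonneg (Nat.cast_nonneg _) (hxpos j).le)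
    have hle : Efun n B x ≤ ∑ j, (m' j : ℝ) * x j := csInf_le hbdd hmem
    rw [← heq, hobj] at hle
    linarith [hxpos k]
  exact aux_core n B hB m hfeas hmin
end

section
/- For B = 2 and n = 2, the function E on the interior of Δ_2 is given explicitly by E(x, y, 1−x−y) = min{ 1 + x + y, 2 − x, 2 − y } for all real x, y with x > 0, y > 0, and x + y < 1. -/
open Finset

lemma inv_pow_le_half {a : ℕ} (h : 1 ≤ a) : ((2:ℝ)^a)⁻¹ ≤ 2⁻¹ := by
  apply inv_anti₀ (by norm_num)
  calc (2:ℝ) = 2^1 := (pow_one 2).symm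
    _ ≤ 2^a := pow_le_pow_right₀ (by norm_num) h

lemma low (a b c : ℕ) (x y z : ℝ) (hx : 0 < x) (hy : 0 < y) (hz : 0 < z)
    (h : ((2:ℝ)^a)⁻¹ + ((2:ℝ)^b)⁻¹ + ((2:ℝ)^c)⁻¹ ≤ 1) :
    min (min (2*x+2*y+z) (x+2*y+2*z)) (2*x+y+2*z) ≤ a*x + b*y + c*z := by
  have pa : (0:ℝ) < ((2:ℝ)^a)⁻¹ := by positivity
  have pb : (0:ℝ) < ((2:ℝ)^b)⁻¹ := by positivity
  have pc : (0:ℝ) < ((2:ℝ)^c)⁻¹ := by positivity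
  have ha : 1 ≤ a := by
    by_contra h'
    push_neg at h'
    interval_cases a
    norm_num at h
    linarith
  have hb : 1 ≤ b := by
    by_contra h'
    push_neg at h'
    interval_cases b
    norm_num at h
    linarith
  have hc : 1 ≤ c := by
    by_contra h'
    push_neg at h'
    interval_cases c
    norm_num at h
    linarith
  have hab : ¬(a = 1 ∧ b = 1) := by
    rintro ⟨rfl, rfl⟩
    have hp : (0:ℝ) < 2^c := by positivity
    norm_num at h; linarith
  have hac : ¬(a = 1 ∧ c = 1) := by
    rintro ⟨rfl, rfl⟩
    have hp : (0:ℝ) < 2^b := by positivity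
    norm_num at h; linarith
  have hbc : ¬(b = 1 ∧ c = 1) := by
    rintro ⟨rfl, rfl⟩
    have hp : (0:ℝ) < 2^a := by positivity
    norm_num at h; linarith
  rcases Nat.lt_or_ge a 2 with ha2 | ha2
  · have ha1 : a = 1 := by omega
    have hb2 : 2 ≤ b := by omega
    have hc2 : 2 ≤ c := by omega
    have hbr : (2:ℝ) ≤ (b:ℝ) := by exact_mod_cast hb2
    have hcr : (2:ℝ) ≤ (c:ℝ) := by exact_mod_cast hc2
    have har : (a:ℝ) = 1 := by rw [ha1]; norm_num
    calc min (min (2*x+2*y+z) (x+2*y+2*z)) (2*x+y+2*z) ≤ x+2*y+2*z :=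
          le_trans (min_le_left _ _) (min_le_right _ _)
      _ ≤ a*x + b*y + c*z := by rw [har]; nlinarith
  · have har : (2:ℝ) ≤ (a:ℝ) := by exact_mod_cast ha2
    rcases Nat.lt_or_ge b 2 with hb2 | hb2
    · have hb1 : b = 1 := by omega
      have hc2 : 2 ≤ c := by omega
      have hcr : (2:ℝ) ≤ (c:ℝ) := by exact_mod_cast hc2
      have hbr : (b:ℝ) = 1 := by rw [hb1]; norm_num
      calc min (min (2*x+2*y+z) (x+2*y+2*z)) (2*x+y+2*z) ≤ 2*x+y+2*z :=
            min_le_right _ _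
        _ ≤ a*x + b*y + c*z := by rw [hbr]; nlinarith
    · have hbr : (2:ℝ) ≤ (b:ℝ) := by exact_mod_cast hb2
      have hcr : (1:ℝ) ≤ (c:ℝ) := by exact_mod_cast hc
      calc min (min (2*x+2*y+z) (x+2*y+2*z)) (2*x+y+2*z) ≤ 2*x+2*y+z :=
            le_trans (min_le_left _ _) (min_le_left _ _)
        _ ≤ a*x + b*y + c*z := by nlinarith

theorem stmt12 (x y : ℝ) (hx : 0 < x) (hy : 0 < y) (hxy : x + y < 1) :
    Efun 2 2 ![x, y, 1 - x - y] = min (min (1 + x + y) (2 - x)) (2 - y) := by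
  have hz : 0 < 1 - x - y := by linarith
  have hsx : Real.sign x = 1 := Real.sign_of_pos hx
  have hsy : Real.sign y = 1 := Real.sign_of_pos hy
  have hsz : Real.sign (1 - x - y) = 1 := Real.sign_of_pos hz
  unfold Efun
  have hsum1 : ∀ m : Fin 3 → ℕ,
      (∑ j, Real.sign (![x, y, 1 - x - y] j) * ((2:ℝ) ^ (m j))⁻¹)
        = ((2:ℝ)^(m 0))⁻¹ + ((2:ℝ)^(m 1))⁻¹ + ((2:ℝ)^(m 2))⁻¹ := by
    intro m
    simp [Fin.sum_univ_three, hsx, hsy, hsz]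
  have hsum2 : ∀ m : Fin 3 → ℕ,
      (∑ j, (m j : ℝ) * (![x, y, 1 - x - y] j))
        = (m 0 : ℝ) * x + (m 1 : ℝ) * y + (m 2 : ℝ) * (1 - x - y) := by
    intro m
    simp [Fin.sum_univ_three]
  have hmem1 : (1 + x + y) ∈ { s : ℝ | ∃ m : Fin 3 → ℕ,
      (∑ j, Real.sign (![x, y, 1 - x - y] j) * ((2:ℝ) ^ (m j))⁻¹) ≤ 1 ∧
      s = ∑ j, (m j : ℝ) * (![x, y, 1 - x - y] j) } := by
    refine ⟨![2, 2, 1], ?_, ?_⟩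
    · rw [hsum1]; norm_num [Matrix.cons_val_two]
    · rw [hsum2]; norm_num [Matrix.cons_val_two]; ring
  have hmem2 : (2 - x) ∈ { s : ℝ | ∃ m : Fin 3 → ℕ,
      (∑ j, Real.sign (![x, y, 1 - x - y] j) * ((2:ℝ) ^ (m j))⁻¹) ≤ 1 ∧
      s = ∑ j, (m j : ℝ) * (![x, y, 1 - x - y] j) } := by
    refine ⟨![1, 2, 2], ?_, ?_⟩
    · rw [hsum1]; norm_num [Matrix.cons_val_two]
    · rw [hsum2]; norm_num [Matrix.cons_val_two]; ring
  have hmem3 : (2 - y) ∈ { s : ℝ | ∃ m : Fin 3 → ℕ,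
      (∑ j, Real.sign (![x, y, 1 - x - y] j) * ((2:ℝ) ^ (m j))⁻¹) ≤ 1 ∧
      s = ∑ j, (m j : ℝ) * (![x, y, 1 - x - y] j) } := by
    refine ⟨![2, 1, 2], ?_, ?_⟩
    · rw [hsum1]; norm_num [Matrix.cons_val_two]
    · rw [hsum2]; norm_num [Matrix.cons_val_two]; ring
  have hlb : ∀ s ∈ { s : ℝ | ∃ m : Fin 3 → ℕ,
      (∑ j, Real.sign (![x, y, 1 - x - y] j) * ((2:ℝ) ^ (m j))⁻¹) ≤ 1 ∧
      s = ∑ j, (m j : ℝ) * (![x, y, 1 - x - y] j) },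
      min (min (1 + x + y) (2 - x)) (2 - y) ≤ s := by
    rintro s ⟨m, hm, rfl⟩
    rw [hsum1] at hm
    rw [hsum2]
    have := low (m 0) (m 1) (m 2) x y (1 - x - y) hx hy hz hm
    have e1 : 2*x+2*y+(1-x-y) = 1 + x + y := by ring
    have e2 : x+2*y+2*(1-x-y) = 2 - x := by ring
    have e3 : 2*x+y+2*(1-x-y) = 2 - y := by ring
    rw [e1, e2, e3] at this
    exact this
  have hbdd : BddBelow { s : ℝ | ∃ m : Fin 3 → ℕ,
      (∑ j, Real.sign (![x, y, 1 - x - y] j) * ((2:ℝ) ^ (m j))⁻¹) ≤ 1 ∧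
      s = ∑ j, (m j : ℝ) * (![x, y, 1 - x - y] j) } := ⟨_, hlb⟩
  apply le_antisymm
  · apply le_min
    apply le_min
    · exact csInf_le hbdd hmem1
    · exact csInf_le hbdd hmem2
    · exact csInf_le hbdd hmem3
  · exact le_csInf ⟨_, hmem1⟩ hlb
end

section
/- Let n ≥ 1 and B ≥ 2 be integers. The function E attains its maximum at the barycenter of Δ_n: E(x) ≤ E(x̄) for all x ∈ Δ_n, where x̄ = (1/(n+1), …, 1/(n+1)). -/
open Finset

theorem stmt13 (n B : ℕ) (hn : 1 ≤ n) (hB : 2 ≤ B) :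
    ∀ x ∈ stdSimplex ℝ (Fin (n + 1)),
      Efun n B x ≤ Efun n B (fun _ => 1 / ((n : ℝ) + 1)) := by
  intro x hx
  obtain ⟨hx0, hx1⟩ := hx
  have hBpos : (0:ℝ) < (B:ℝ) := by
    have : 0 < B := lt_of_lt_of_le (by norm_num) hB
    exact_mod_cast this
  have hypos : (0:ℝ) < 1 / ((n:ℝ) + 1) := by positivity
  have hysign : Real.sign ((1:ℝ) / ((n:ℝ) + 1)) = 1 := Real.sign_of_pos hypos
  have hsign01 : ∀ j, 0 ≤ Real.sign (x j) ∧ Real.sign (x j) ≤ 1 := by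
    intro j
    rcases eq_or_lt_of_le (hx0 j) with h | h
    · simp [← h]
    · simp [Real.sign_of_pos h]
  have hbdd : BddBelow { s : ℝ | ∃ m : Fin (n + 1) → ℕ,
      (∑ j, Real.sign (x j) * ((B : ℝ) ^ (m j))⁻¹) ≤ 1 ∧
      s = ∑ j, (m j : ℝ) * x j } := by
    refine ⟨0, ?_⟩
    rintro s ⟨m, -, rfl⟩
    exact Finset.sum_nonneg fun j _ => mul_nonneg (Nat.cast_nonneg _) (hx0 j)
  unfold Efun
  apply le_csInf
  · -- nonemptiness of the barycenter set
    refine ⟨∑ j : Fin (n+1), ((n+1 : ℕ) : ℝ) * (1 / ((n:ℝ) + 1)), fun _ => n + 1, ?_, rfl⟩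
    have hlt : (n + 1 : ℕ) ≤ B ^ (n + 1) := by
      calc n + 1 ≤ 2 ^ (n + 1) := le_of_lt (Nat.lt_two_pow_self (n := n + 1))
        _ ≤ B ^ (n + 1) := Nat.pow_le_pow_left hB _
    have hltR : ((n:ℝ) + 1) ≤ (B:ℝ) ^ (n + 1) := by exact_mod_cast hlt
    have hBp : (0:ℝ) < (B:ℝ) ^ (n + 1) := by positivity
    calc (∑ j : Fin (n+1), Real.sign ((1:ℝ) / ((n:ℝ)+1)) * ((B:ℝ) ^ (n+1))⁻¹)
        = ((n:ℝ) + 1) * ((B:ℝ) ^ (n+1))⁻¹ := by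
          rw [show (∑ j : Fin (n+1), Real.sign ((1:ℝ) / ((n:ℝ)+1)) * ((B:ℝ) ^ (n+1))⁻¹)
              = ∑ _j : Fin (n+1), ((B:ℝ) ^ (n+1))⁻¹ from
            Finset.sum_congr rfl fun j _ => by rw [hysign, one_mul]]
          rw [Finset.sum_const, Finset.card_univ, Fintype.card_fin, nsmul_eq_mul]
          push_cast
          ring
      _ ≤ 1 := by
          rw [mul_inv_le_iff₀ hBp, one_mul]
          exact hltR
  · rintro s ⟨m, hm, rfl⟩
    have hm' : (∑ j, ((B:ℝ) ^ (m j))⁻¹) ≤ 1 := by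
      have e : (∑ j, ((B:ℝ) ^ (m j))⁻¹)
          = ∑ j, Real.sign ((fun _ : Fin (n+1) => (1:ℝ) / ((n:ℝ) + 1)) j) * ((B:ℝ) ^ (m j))⁻¹ :=
        Finset.sum_congr rfl fun j _ => by
          rw [show ((fun _ : Fin (n+1) => (1:ℝ) / ((n:ℝ) + 1)) j) = (1:ℝ) / ((n:ℝ) + 1) from rfl,
            hysign, one_mul]
      rw [e]; exact hm
    have key : ∃ k : Fin (n+1),
        (∑ j, (m (j + k) : ℝ) * x j) ≤ ∑ j, (m j : ℝ) * (1 / ((n:ℝ) + 1)) := by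
      by_contra h
      push_neg at h
      have h1 : ∑ _k : Fin (n+1), (∑ j, (m j : ℝ) * (1 / ((n:ℝ) + 1)))
          < ∑ k : Fin (n+1), ∑ j, (m (j + k) : ℝ) * x j :=
        Finset.sum_lt_sum_of_nonempty Finset.univ_nonempty (fun k _ => h k)
      have e1 : ∑ k : Fin (n+1), ∑ j, (m (j + k) : ℝ) * x j = ∑ i, (m i : ℝ) := by
        rw [Finset.sum_comm]
        have step : ∀ j : Fin (n+1), ∑ k : Fin (n+1), (m (j + k) : ℝ) * x j
            = (∑ i, (m i : ℝ)) * x j := by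
          intro j
          rw [← Finset.sum_mul]
          congr 1
          exact Equiv.sum_comp (Equiv.addLeft j) (fun i => (m i : ℝ))
        calc ∑ j, ∑ k : Fin (n+1), (m (j + k) : ℝ) * x j
            = ∑ j, (∑ i, (m i : ℝ)) * x j := by
              exact Finset.sum_congr rfl fun j _ => step j
          _ = (∑ i, (m i : ℝ)) * ∑ j, x j := by rw [Finset.mul_sum]
          _ = ∑ i, (m i : ℝ) := by rw [hx1, mul_one]
      have e2 : ∑ _k : Fin (n+1), (∑ j, (m j : ℝ) * (1 / ((n:ℝ) + 1)))
          = ∑ i, (m i : ℝ) := by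
        rw [Finset.sum_const, Finset.card_univ, Fintype.card_fin, ← Finset.sum_mul, nsmul_eq_mul]
        have hne : ((n:ℝ) + 1) ≠ 0 := by positivity
        push_cast
        field_simp
      rw [e1, e2] at h1
      exact lt_irrefl _ h1
    obtain ⟨k, hk⟩ := key
    refine csInf_le_of_le hbdd ⟨fun j => m (j + k), ?_, rfl⟩ hk
    calc ∑ j, Real.sign (x j) * ((B:ℝ) ^ (m (j + k)))⁻¹
        ≤ ∑ j, ((B:ℝ) ^ (m (j + k)))⁻¹ := by
          refine Finset.sum_le_sum fun j _ => ?_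
          have hb : (0:ℝ) ≤ ((B:ℝ) ^ (m (j + k)))⁻¹ := by positivity
          nlinarith [(hsign01 j).1, (hsign01 j).2, hb]
      _ = ∑ i, ((B:ℝ) ^ (m i))⁻¹ :=
          Equiv.sum_comp (Equiv.addRight k) (fun i => ((B:ℝ) ^ (m i))⁻¹)
      _ ≤ 1 := hm'
end

section
/- Let n ≥ 1 and B ≥ 2 be integers. The maximum of E over Δ_n equals κ(n,B) = ⌊log_B n⌋ + ⌈B(n + 1 − B^{⌊log_B n⌋})/(B − 1)⌉ / (n + 1). -/
open Finset

/-- `κ(n,B) = ⌊log_B n⌋ + ⌈B(n+1-B^⌊log_B n⌋)/(B-1)⌉/(n+1)`. -/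
noncomputable def kappa (n B : ℕ) : ℝ :=
  (⌊Real.logb B n⌋ : ℝ) +
    (⌈(B : ℝ) * ((n : ℝ) + 1 - (B : ℝ) ^ (⌊Real.logb B n⌋ : ℤ)) / ((B : ℝ) - 1)⌉ : ℝ) /
      ((n : ℝ) + 1)

/-- The extremal code length assignment: `q` codewords of length `L+1`,
the rest of length `L`. -/
def cfun (N L q : ℕ) : Fin N → ℕ := fun i => if (i : ℕ) < q then L + 1 else L

lemma sum_cfun_comp {M : Type*} [AddCommMonoid M] (N L q : ℕ) (hq : q ≤ N) (f : ℕ → M) :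
    ∑ i : Fin N, f (cfun N L q i) = q • f (L + 1) + (N - q) • f L := by
  have h : ∑ i : Fin N, f (cfun N L q i)
      = ∑ i ∈ Finset.range N, f (if i < q then L + 1 else L) :=
    Fin.sum_univ_eq_sum_range (fun i => f (if i < q then L + 1 else L)) N
  rw [h, Finset.range_eq_Ico, ← Finset.sum_Ico_consecutive _ (Nat.zero_le q) hq]
  have h1 : ∑ i ∈ Finset.Ico 0 q, f (if i < q then L + 1 else L) = q • f (L + 1) := by
    rw [Finset.sum_congr rfl (fun i hi => by
      rw [if_pos (Finset.mem_Ico.mp hi).2]), Finset.sum_const, Nat.card_Ico, Nat.sub_zero]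
  have h2 : ∑ i ∈ Finset.Ico q N, f (if i < q then L + 1 else L) = (N - q) • f L := by
    rw [Finset.sum_congr rfl (fun i hi => by
      rw [if_neg (not_lt.mpr (Finset.mem_Ico.mp hi).1)]), Finset.sum_const, Nat.card_Ico]
  rw [h1, h2]

/-- Bernoulli-type tangent line bound : `B^(L+1-m) ≥ 1 - (B-1)(m-(L+1))` for all naturals. -/
lemma bernoulli_bound {B : ℕ} (hB : 2 ≤ B) (L t : ℕ) :
    1 - ((B : ℝ) - 1) * ((t : ℝ) - ((L : ℝ) + 1)) ≤ (B : ℝ) ^ (L + 1) * ((B : ℝ) ^ t)⁻¹ := by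
  have hBR : (2 : ℝ) ≤ (B : ℝ) := by exact_mod_cast hB
  have hBpos : (0 : ℝ) < B := by linarith
  have hBt : (0 : ℝ) < (B : ℝ) ^ t := pow_pos hBpos t
  rcases le_or_gt t (L + 1) with h | h
  · obtain ⟨e, he⟩ : ∃ e, L + 1 = t + e := ⟨L + 1 - t, by omega⟩
    have hpow : (B : ℝ) ^ (L + 1) * ((B : ℝ) ^ t)⁻¹ = (B : ℝ) ^ e := by
      rw [he, pow_add]; field_simp
    rw [hpow]
    have hb := one_add_mul_le_pow (a := (B : ℝ) - 1) (by linarith) e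
    have hBe : (1 + ((B : ℝ) - 1)) ^ e = (B : ℝ) ^ e := by ring_nf
    have heR : ((L : ℝ) + 1) = (t : ℝ) + (e : ℝ) := by exact_mod_cast congrArg (Nat.cast : ℕ → ℝ) he
    rw [← hBe]
    have : (t : ℝ) - ((L : ℝ) + 1) = -(e : ℝ) := by rw [heR]; ring
    rw [this]
    calc 1 - ((B : ℝ) - 1) * (-(e : ℝ)) = 1 + (e : ℝ) * ((B : ℝ) - 1) := by ring
    _ ≤ (1 + ((B : ℝ) - 1)) ^ e := hb
  · have h1 : (1 : ℝ) ≤ (t : ℝ) - ((L : ℝ) + 1) := by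
      have h' : (L + 1 + 1 : ℕ) ≤ t := h
      have := (Nat.cast_le (α := ℝ)).mpr h'
      push_cast at this ⊢; linarith
    have h2 : (1 : ℝ) ≤ (B : ℝ) - 1 := by linarith
    have h3 : (0 : ℝ) ≤ (B : ℝ) ^ (L + 1) * ((B : ℝ) ^ t)⁻¹ := by positivity
    nlinarith

/-- Lower bound for the total codeword length given the Kraft inequality. -/
lemma total_lower {B N L q : ℕ} (hB : 2 ≤ B) (hNpos : 0 < N)
    (hq : ((q : ℝ) - 1) * ((B : ℝ) - 1) < (B : ℝ) * N - (B : ℝ) ^ (L + 1))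
    (m : Fin N → ℕ) (hm : ∑ j, ((B : ℝ) ^ (m j))⁻¹ ≤ 1) :
    N * L + q ≤ ∑ j, m j := by
  have hBR : (2 : ℝ) ≤ (B : ℝ) := by exact_mod_cast hB
  have hBpos : (0 : ℝ) < (B : ℝ) ^ (L + 1) := by positivity
  have hsum := Finset.sum_le_sum (fun j (_ : j ∈ Finset.univ) => bernoulli_bound hB L (m j))
  set S : ℝ := ∑ j, ((m j : ℕ) : ℝ) with hS
  have hlhs : ∑ j : Fin N, (1 - ((B : ℝ) - 1) * ((m j : ℝ) - ((L : ℝ) + 1)))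
      = (N : ℝ) - ((B : ℝ) - 1) * (S - (N : ℝ) * ((L : ℝ) + 1)) := by
    rw [Finset.sum_sub_distrib, Finset.sum_const, Finset.card_univ, Fintype.card_fin,
      ← Finset.mul_sum, Finset.sum_sub_distrib, Finset.sum_const, Finset.card_univ,
      Fintype.card_fin, ← hS]
    push_cast
    ring
  have hrhs : ∑ j : Fin N, (B : ℝ) ^ (L + 1) * ((B : ℝ) ^ (m j))⁻¹ ≤ (B : ℝ) ^ (L + 1) := by
    rw [← Finset.mul_sum]
    calc (B : ℝ) ^ (L + 1) * ∑ j, ((B : ℝ) ^ (m j))⁻¹ ≤ (B : ℝ) ^ (L + 1) * 1 :=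
      mul_le_mul_of_nonneg_left hm hBpos.le
    _ = (B : ℝ) ^ (L + 1) := mul_one _
  rw [hlhs] at hsum
  have hkey : (N : ℝ) - ((B : ℝ) - 1) * (S - (N : ℝ) * ((L : ℝ) + 1)) ≤ (B : ℝ) ^ (L + 1) :=
    le_trans hsum hrhs
  -- conclude (q - 1) < S - N*L
  have h1 : ((B : ℝ) - 1) * ((q : ℝ) - 1) < ((B : ℝ) - 1) * (S - (N : ℝ) * L) := by nlinarith
  have h2 : ((q : ℝ) - 1) < S - (N : ℝ) * L :=
    (mul_lt_mul_iff_right₀ (by linarith : (0 : ℝ) < (B : ℝ) - 1)).mp h1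
  by_contra hcon
  push_neg at hcon
  have hcon' : ((∑ j, m j) + 1 : ℕ) ≤ N * L + q := hcon
  have hconR := (Nat.cast_le (α := ℝ)).mpr hcon'
  push_cast at hconR
  rw [hS] at h2
  linarith [hconR, h2]

theorem stmt14 (n B : ℕ) (hn : 1 ≤ n) (hB : 2 ≤ B) :
    IsGreatest (Efun n B '' stdSimplex ℝ (Fin (n + 1))) (kappa n B) := by
  have hB1 : 1 < B := hB
  have hBR : (2 : ℝ) ≤ (B : ℝ) := by exact_mod_cast hB
  set N := n + 1 with hNdef
  set L := Nat.log B n with hLdef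
  set k := (B ^ (L + 1) - N) / (B - 1) with hkdef
  set q := N - k with hqdef
  have hNpos : 0 < N := Nat.succ_pos n
  have hNR : (0 : ℝ) < (N : ℝ) := by exact_mod_cast hNpos
  have hF1 : B ^ L ≤ n := Nat.pow_log_le_self B (by omega)
  have hF2 : n < B ^ (L + 1) := Nat.lt_pow_succ_log_self hB1 n
  have hNle : N ≤ B ^ (L + 1) := hF2
  have hDpos : 0 < B - 1 := by omega
  -- division facts
  have hA : (B ^ (L + 1) - N) + N = B ^ (L + 1) := Nat.sub_add_cancel hNle
  have hdiv : (B - 1) * k + (B ^ (L + 1) - N) % (B - 1) = B ^ (L + 1) - N :=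
    Nat.div_add_mod _ _
  have hmod : (B ^ (L + 1) - N) % (B - 1) < B - 1 := Nat.mod_lt _ hDpos
  set r := (B ^ (L + 1) - N) % (B - 1) with hrdef
  -- real versions
  have hBm1 : ((B - 1 : ℕ) : ℝ) = (B : ℝ) - 1 := by
    push_cast [Nat.cast_sub (le_of_lt hB1)]; ring
  have hAR : ((B ^ (L + 1) - N : ℕ) : ℝ) + (N : ℝ) = (B : ℝ) ^ (L + 1) := by
    exact_mod_cast congrArg (Nat.cast : ℕ → ℝ) hA
  have hdivR : ((B : ℝ) - 1) * (k : ℝ) + (r : ℝ) = ((B ^ (L + 1) - N : ℕ) : ℝ) := by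
    rw [← hBm1]; exact_mod_cast congrArg (Nat.cast : ℕ → ℝ) hdiv
  have hmodR : (r : ℝ) + 1 ≤ (B : ℝ) - 1 := by
    rw [← hBm1]; exact_mod_cast hmod
  have hr0 : (0 : ℝ) ≤ (r : ℝ) := Nat.cast_nonneg r
  have hBLn : (B : ℝ) ^ L ≤ (n : ℝ) := by exact_mod_cast hF1
  have hnN : (n : ℝ) = (N : ℝ) - 1 := by rw [hNdef]; push_cast; ring
  have hpowS : (B : ℝ) ^ (L + 1) = (B : ℝ) ^ L * (B : ℝ) := pow_succ _ _
  -- k < N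
  have hkN : k < N := by
    by_contra h
    push_neg at h
    have hkR : (N : ℝ) ≤ (k : ℝ) := by exact_mod_cast h
    have t1 : (N : ℝ) * ((B : ℝ) - 1) ≤ (k : ℝ) * ((B : ℝ) - 1) :=
      mul_le_mul_of_nonneg_right hkR (by linarith)
    have t2 : (B : ℝ) ^ L * (B : ℝ) ≤ (n : ℝ) * (B : ℝ) :=
      mul_le_mul_of_nonneg_right hBLn (by linarith)
    have t3 : (n : ℝ) * (B : ℝ) = ((n : ℝ) + 1) * (B : ℝ) - (B : ℝ) := by ring
    have t4 : ((n : ℝ) + 1) = (N : ℝ) := by rw [hNdef]; push_cast; ring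
    have t5 : (n : ℝ) * (B : ℝ) = (N : ℝ) * (B : ℝ) - (B : ℝ) := by rw [← t4]; ring
    linarith [hdivR, hAR, hr0, hnN, hpowS, t1, t2, t5]
  have hqle : q ≤ N := Nat.sub_le _ _
  have hNq : N - q = k := by omega
  have hqR : (q : ℝ) = (N : ℝ) - (k : ℝ) := by
    rw [hqdef]; push_cast [Nat.cast_sub (le_of_lt hkN)]; ring
  have t3 : (n : ℝ) * (B : ℝ) = (N : ℝ) * (B : ℝ) - (B : ℝ) := by rw [hnN]; ring
  have t4 : (q : ℝ) * (B : ℝ) = (N : ℝ) * (B : ℝ) - (k : ℝ) * (B : ℝ) := by rw [hqR]; ring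
  -- floor of logb
  have hfloor : ⌊Real.logb B n⌋ = (L : ℤ) := by
    rw [Real.floor_logb_natCast (Nat.cast_nonneg n), Int.log_natCast]
  -- ceiling identity
  have hceil : ⌈(B : ℝ) * ((n : ℝ) + 1 - (B : ℝ) ^ L) / ((B : ℝ) - 1)⌉ = (q : ℤ) := by
    rw [Int.ceil_eq_iff]
    have hBgt : (0 : ℝ) < (B : ℝ) - 1 := by linarith
    constructor
    · rw [lt_div_iff₀ hBgt]
      push_cast
      linarith [hdivR, hAR, hmodR, hr0, hqR, hnN, hpowS, t3, t4]
    · rw [div_le_iff₀ hBgt]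
      push_cast
      linarith [hdivR, hAR, hmodR, hr0, hqR, hnN, hpowS, t3, t4]
  -- kappa in closed form
  have hkappa : kappa n B = ((N : ℝ) * (L : ℝ) + (q : ℝ)) / (N : ℝ) := by
    rw [kappa, hfloor, zpow_natCast, hceil]
    have hn1 : ((n : ℝ) + 1) = (N : ℝ) := by rw [hNdef]; push_cast; ring
    rw [hn1]
    push_cast
    field_simp
  -- the extremal code
  set c : Fin N → ℕ := cfun N L q with hcdef
  have hsumc : ∑ i : Fin N, ((c i : ℕ) : ℝ) = (N : ℝ) * (L : ℝ) + (q : ℝ) := by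
    rw [hcdef, sum_cfun_comp N L q hqle (fun t => (t : ℝ)), hNq]
    have hkq : (q : ℝ) + (k : ℝ) = (N : ℝ) := by rw [hqR]; ring
    simp only [nsmul_eq_mul]
    have hNcast : (N : ℝ) = (n : ℝ) + 1 := by rw [hNdef]; push_cast; ring
    push_cast
    linear_combination (L : ℝ) * hkq
  have hkraftc : ∑ i : Fin N, ((B : ℝ) ^ (c i))⁻¹ ≤ 1 := by
    rw [hcdef, sum_cfun_comp N L q hqle (fun t => ((B : ℝ) ^ t)⁻¹), hNq]
    simp only [nsmul_eq_mul]
    have hBpos : (0 : ℝ) < (B : ℝ) := by linarith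
    have hp1 : (0 : ℝ) < (B : ℝ) ^ (L + 1) := by positivity
    have key : (q : ℝ) + (k : ℝ) * (B : ℝ) ≤ (B : ℝ) ^ (L + 1) := by
      linarith [hdivR, hAR, hqR, hr0]
    have heq : (q : ℝ) * ((B : ℝ) ^ (L + 1))⁻¹ + (k : ℝ) * ((B : ℝ) ^ L)⁻¹
        = ((q : ℝ) + (k : ℝ) * (B : ℝ)) / (B : ℝ) ^ (L + 1) := by
      rw [hpowS]
      have h1 : (B : ℝ) ^ L ≠ 0 := by positivity
      field_simp
    rw [heq, div_le_one hp1]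
    exact key
  -- strict inequality needed for the lower bound
  have hqstrict : ((q : ℝ) - 1) * ((B : ℝ) - 1) < (B : ℝ) * N - (B : ℝ) ^ (L + 1) := by
    linarith [hdivR, hAR, hmodR, hr0, hqR]
  constructor
  · -- kappa is attained at the uniform distribution
    refine ⟨fun _ => (N : ℝ)⁻¹, ⟨fun i => by positivity, ?_⟩, ?_⟩
    · rw [Finset.sum_const, Finset.card_univ, Fintype.card_fin, nsmul_eq_mul]
      push_cast
      field_simp
      exact_mod_cast hNdef.symm
    · rw [Efun]
      have hs1 : Real.sign ((N : ℝ)⁻¹) = 1 := Real.sign_of_pos (by positivity)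
      have hmem : kappa n B ∈ { s : ℝ | ∃ m : Fin N → ℕ,
          (∑ j, Real.sign ((fun _ : Fin N => (N : ℝ)⁻¹) j) * ((B : ℝ) ^ (m j))⁻¹) ≤ 1 ∧
          s = ∑ j, (m j : ℝ) * (fun _ : Fin N => (N : ℝ)⁻¹) j } := by
        refine ⟨c, ?_, ?_⟩
        · simpa [hs1] using hkraftc
        · rw [hkappa]
          have : ∑ j, ((c j : ℕ) : ℝ) * (N : ℝ)⁻¹ = (∑ j, ((c j : ℕ) : ℝ)) * (N : ℝ)⁻¹ := by
            rw [Finset.sum_mul]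
          simp only
          rw [this, hsumc, div_eq_mul_inv]
      have hlb : ∀ s ∈ { s : ℝ | ∃ m : Fin N → ℕ,
          (∑ j, Real.sign ((fun _ : Fin N => (N : ℝ)⁻¹) j) * ((B : ℝ) ^ (m j))⁻¹) ≤ 1 ∧
          s = ∑ j, (m j : ℝ) * (fun _ : Fin N => (N : ℝ)⁻¹) j }, kappa n B ≤ s := by
        rintro s ⟨m, hK, rfl⟩
        simp only [hs1, one_mul] at hK
        have hT := total_lower hB hNpos hqstrict m hK
        have hTR : (N : ℝ) * (L : ℝ) + (q : ℝ) ≤ ∑ j, ((m j : ℕ) : ℝ) := by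
          have h' := (Nat.cast_le (α := ℝ)).mpr hT
          push_cast at h'
          have hNcast : (N : ℝ) = (n : ℝ) + 1 := by rw [hNdef]; push_cast; ring
          rw [hNcast]
          have hL : (N : ℝ) * (L : ℝ) = ((n : ℝ) + 1) * (L : ℝ) := by rw [hNcast]
          linarith [h', hL]
        simp only
        have hsm : ∑ j, ((m j : ℕ) : ℝ) * (N : ℝ)⁻¹ = (∑ j, ((m j : ℕ) : ℝ)) * (N : ℝ)⁻¹ := by
          rw [Finset.sum_mul]
        rw [hsm, hkappa, div_eq_mul_inv]
        exact mul_le_mul_of_nonneg_right (by linarith [hTR]) (inv_nonneg.mpr hNR.le)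
      exact le_antisymm (csInf_le ⟨kappa n B, hlb⟩ hmem) (le_csInf ⟨kappa n B, hmem⟩ hlb)
  · -- kappa is an upper bound
    rintro y ⟨x, hx, rfl⟩
    set σ := Tuple.sort x with hσ
    set m : Fin N → ℕ := fun j => c (σ⁻¹ j) with hmdef
    have hsle : ∀ j, Real.sign (x j) ≤ 1 := by
      intro j
      rcases (hx.1 j).eq_or_lt with h | h
      · rw [← h, Real.sign_zero]; norm_num
      · rw [Real.sign_of_pos h]
    have hKraft : (∑ j, Real.sign (x j) * ((B : ℝ) ^ (m j))⁻¹) ≤ 1 := by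
      calc ∑ j, Real.sign (x j) * ((B : ℝ) ^ (m j))⁻¹ ≤ ∑ j, ((B : ℝ) ^ (m j))⁻¹ :=
          Finset.sum_le_sum (fun j _ => mul_le_of_le_one_left (by positivity) (hsle j))
      _ = ∑ i, ((B : ℝ) ^ (c i))⁻¹ := Equiv.sum_comp σ⁻¹ (fun i => ((B : ℝ) ^ (c i))⁻¹)
      _ ≤ 1 := hkraftc
    have hAnti : Antivary (fun j => ((m j : ℕ) : ℝ)) x := by
      intro i j hij
      have hms := Tuple.monotone_sort x
      have h1 : σ⁻¹ i < σ⁻¹ j := by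
        by_contra hcon
        push_neg at hcon
        have h2 := hms hcon
        simp only [← hσ, Function.comp_apply, Equiv.Perm.inv_def, Equiv.apply_symm_apply] at h2
        exact absurd hij (not_lt.mpr h2)
      have hcc : c (σ⁻¹ j) ≤ c (σ⁻¹ i) := by
        have hv : ((σ⁻¹ i : Fin N) : ℕ) < ((σ⁻¹ j : Fin N) : ℕ) := h1
        simp only [hcdef, cfun]
        split_ifs <;> omega
      have hmm : m j ≤ m i := hcc
      show ((m j : ℕ) : ℝ) ≤ ((m i : ℕ) : ℝ)
      exact_mod_cast hmm
    have hsm : ∑ j, ((m j : ℕ) : ℝ) = (N : ℝ) * (L : ℝ) + (q : ℝ) := by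
      have := Equiv.sum_comp σ⁻¹ (fun i => ((c i : ℕ) : ℝ))
      rw [hmdef]
      simp only at this ⊢
      rw [this, hsumc]
    have hchev := hAnti.card_mul_sum_le_sum_mul_sum
    simp only [Fintype.card_fin] at hchev
    rw [hsm, hx.2, mul_one] at hchev
    have h1 : Efun n B x ≤ ∑ j, ((m j : ℕ) : ℝ) * x j := by
      rw [Efun]
      apply csInf_le
      · refine ⟨0, ?_⟩
        rintro s ⟨m', _, rfl⟩
        exact Finset.sum_nonneg fun j _ => mul_nonneg (Nat.cast_nonneg _) (hx.1 j)
      · exact ⟨m, hKraft, rfl⟩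
    have h2 : ∑ j, ((m j : ℕ) : ℝ) * x j ≤ kappa n B := by
      rw [hkappa, le_div_iff₀ hNR]
      linarith
    exact le_trans h1 h2
end
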